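/- There exist constants K > 0 and c0 > 0 such that for every c2 ≥ c0 there exists N ∈ ℕ with the following property: for every even n ≥ N and every integer l with m_n + c2 n^{3/4} ≤ l ≤ (3/4)n, one has π_n({l,…,n}) ≤ K (n^{3/4}/(l − m_n)) e^{-n W(l/n)}, where m_n = n/2. -/

import Mathlib

open Real Filter Finset MeasureTheory
open scoped Classical BigOperators NNReal

noncomputable section

/-- Configurations of the exclusion–Glauber process on the discrete torus `ℤ/nℤ`. -/
abbrev Cfg (n : ℕ) := Fin n → Bool

/-- Cyclic successor `x+1` on the discrete torus. -/
def fsucc {n : ℕ} (x : Fin n) : Fin n := ⟨(x.1 + 1) % n, Nat.mod_lt _ x.pos⟩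

/-- Cyclic predecessor `x-1` on the discrete torus. -/
def fpred {n : ℕ} (x : Fin n) : Fin n := ⟨(x.1 + n - 1) % n, Nat.mod_lt _ x.pos⟩

/-- `η^{x,x+1}` : exchange the occupation variables at `x` and `x+1`. -/
def swapCfg {n : ℕ} (η : Cfg n) (x : Fin n) : Cfg n :=
  fun y => if y = x then η (fsucc x) else if y = fsucc x then η x else η y

/-- `η^x` : flip the occupation variable at `x`. -/
def flipCfg {n : ℕ} (η : Cfg n) (x : Fin n) : Cfg n :=
  Function.update η x (! η x)

/-- Occupation variable `η(x) ∈ {0,1}` as a real number. -/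
def occ {n : ℕ} (η : Cfg n) (x : Fin n) : ℝ := if η x then 1 else 0

/-- Spin variable `σ(x) = 2η(x) - 1`. -/
def spin {n : ℕ} (η : Cfg n) (x : Fin n) : ℝ := 2 * occ η x - 1

/-- `γ_n = (1 - θ/√n)/2`. -/
def gam (θ : ℝ) (n : ℕ) : ℝ := (1 - θ / Real.sqrt n) / 2

/-- Glauber jump rates `c_x(η)`. -/
def cRate (θ : ℝ) {n : ℕ} (η : Cfg n) (x : Fin n) : ℝ :=
  1 - gam θ n * spin η x * (spin η (fpred x) + spin η (fsucc x))
    + gam θ n ^ 2 * spin η (fpred x) * spin η (fsucc x)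

/-- Exclusion generator. -/
def LexGen {n : ℕ} (f : Cfg n → ℝ) (η : Cfg n) : ℝ :=
  ∑ x, (f (swapCfg η x) - f η)

/-- Glauber generator. -/
def LG (θ : ℝ) {n : ℕ} (f : Cfg n → ℝ) (η : Cfg n) : ℝ :=
  ∑ x, cRate θ η x * (f (flipCfg η x) - f η)

/-- Full generator `L_n = n² L_n^ex + a L_n^G`. -/
def Lfull (θ a : ℝ) {n : ℕ} (f : Cfg n → ℝ) (η : Cfg n) : ℝ :=
  (n : ℝ) ^ 2 * LexGen f η + a * LG θ f η

/-- `μ` is an invariant (stationary) probability measure for `L_n`. -/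
def IsStationaryGen (θ a : ℝ) (n : ℕ) (μ : Cfg n → ℝ) : Prop :=
  (∀ η, 0 ≤ μ η) ∧ (∑ η, μ η = 1) ∧
    ∀ f : Cfg n → ℝ, ∑ η, Lfull θ a f η * μ η = 0

/-- Rescaled total magnetization `Y^n = n^{-3/4} ∑_x (η(x) - 1/2)`. -/
def magY (n : ℕ) (η : Cfg n) : ℝ :=
  (n : ℝ) ^ (-(3 : ℝ) / 4) * ∑ x, (occ η x - 1 / 2)

/-- The quartic potential `V(y) = θ y² + y⁴/2`. -/
def Vpot (θ : ℝ) (y : ℝ) : ℝ := θ * y ^ 2 + y ^ 4 / 2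

/-- Normalization `Z = ∫ e^{-2V}`. -/
def Zconst (θ : ℝ) : ℝ := ∫ y : ℝ, Real.exp (-2 * Vpot θ y)

/-- The function `U`. -/
def Ufun (θ : ℝ) (n : ℕ) (ϱ : ℝ) : ℝ :=
  (gam θ n)⁻¹ * ((1 + 2 * gam θ n * ϱ) * Real.log (1 + 2 * gam θ n * ϱ)
    + (1 - 2 * gam θ n * ϱ) * Real.log (1 - 2 * gam θ n * ϱ))

/-- `U_0(ρ) = U(ρ - 1/2)`. -/
def U0 (θ : ℝ) (n : ℕ) (ρ : ℝ) : ℝ := Ufun θ n (ρ - 1 / 2)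

/-- Total magnetization `m̄_n(η) = ∑_x (η(x) - 1/2)`. -/
def mbar {n : ℕ} (η : Cfg n) : ℝ := ∑ x, (occ η x - 1 / 2)

/-- Uniform measure on `Ω_n`. -/
def nuHalf (n : ℕ) (_ : Cfg n) : ℝ := 1 / 2 ^ n

/-- Normalizing constant `Z_U^n`. -/
def ZU (θ : ℝ) (n : ℕ) : ℝ :=
  ∑ η : Cfg n, Real.exp (n * Ufun θ n (mbar η / n)) * nuHalf n η

/-- The tilted reference measure `ν_U^n`. -/
def nuU (θ : ℝ) (n : ℕ) (η : Cfg n) : ℝ :=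
  (ZU θ n)⁻¹ * Real.exp (n * Ufun θ n (mbar η / n)) * nuHalf n η

/-- Relative entropy `H_n(f | ν_U^n) = ∫ f log f dν_U^n`. -/
def entU (θ : ℝ) (n : ℕ) (f : Cfg n → ℝ) : ℝ :=
  ∑ η, f η * Real.log (f η) * nuU θ n η

/-- Exclusion Dirichlet form `D_n^ex(f; ν_U^n)`. -/
def Dex (θ : ℝ) (n : ℕ) (f : Cfg n → ℝ) : ℝ :=
  (1 / 2) * ∑ x, ∑ η, (Real.sqrt (f (swapCfg η x)) - Real.sqrt (f η)) ^ 2 * nuU θ n η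

/-- Glauber Dirichlet form `D_n^G(f; ν_U^n)`. -/
def DG (θ : ℝ) (n : ℕ) (f : Cfg n → ℝ) : ℝ :=
  (1 / 2) * ∑ x, ∑ η, cRate θ η x * (Real.sqrt (f (flipCfg η x)) - Real.sqrt (f η)) ^ 2 * nuU θ n η

/-- `f` is a probability density with respect to `ν_U^n`. -/
def IsDensity (θ : ℝ) (n : ℕ) (f : Cfg n → ℝ) : Prop :=
  (∀ η, 0 ≤ f η) ∧ ∑ η, f η * nuU θ n η = 1

/-- Number of particles of a configuration. -/
def ones {n : ℕ} (η : Cfg n) : ℕ := ∑ x, if η x then 1 else 0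

/-- `Ω_{n,m}`: configurations with exactly `m` particles. -/
def levelSet (n m : ℕ) : Finset (Cfg n) := Finset.univ.filter fun η => ones η = m

/-- Average `⟨f⟩` with respect to the uniform measure on `Ω_{n,m}`. -/
def avgLevel {n : ℕ} (f : Cfg n → ℝ) (m : ℕ) : ℝ :=
  (∑ η ∈ levelSet n m, f η) / (levelSet n m).card

/-- `π_n(m) = ν_U^n(Ω_{n,m})`. -/
def piBD (θ : ℝ) (n m : ℕ) : ℝ := ∑ η ∈ levelSet n m, nuU θ n η

/-- Birth rate `b_n(m)`. -/
def bBD (θ : ℝ) (n m : ℕ) : ℝ :=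
  ((n : ℝ) - m) * Real.exp (n * (U0 θ n (((m : ℝ) + 1) / n) - U0 θ n ((m : ℝ) / n)) / 2)

/-- Death rate `d_n(m)`. -/
def dBD (θ : ℝ) (n m : ℕ) : ℝ :=
  (m : ℝ) * Real.exp (n * (U0 θ n (((m : ℝ) - 1) / n) - U0 θ n ((m : ℝ) / n)) / 2)

/-- Relative entropy for the birth–death chain. -/
def entBD (θ : ℝ) (n : ℕ) (g : ℕ → ℝ) : ℝ :=
  ∑ m ∈ Finset.range (n + 1), g m * Real.log (g m) * piBD θ n m

/-- Dirichlet form of the birth–death chain. -/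
def DBD (θ : ℝ) (n : ℕ) (g : ℕ → ℝ) : ℝ :=
  (1 / 2) * ∑ m ∈ Finset.range n,
    bBD θ n m * (Real.sqrt (g (m + 1)) - Real.sqrt (g m)) ^ 2 * piBD θ n m

/-- `π_n({l,…,n})`. -/
def piTail (θ : ℝ) (n l : ℕ) : ℝ := ∑ k ∈ Finset.Icc l n, piBD θ n k

/-- `π_n({0,…,l})`. -/
def piHead (θ : ℝ) (n l : ℕ) : ℝ := ∑ k ∈ Finset.Icc 0 l, piBD θ n k

/-- `E(ρ) = ρ log ρ + (1-ρ) log(1-ρ) + log 2`. -/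
def Efun (ρ : ℝ) : ℝ := ρ * Real.log ρ + (1 - ρ) * Real.log (1 - ρ) + Real.log 2

/-- `W = E - U_0`. -/
def Wfun (θ : ℝ) (n : ℕ) (ρ : ℝ) : ℝ := Efun ρ - U0 θ n ρ

/-- `Ψ(x) = -x log x`. -/
def Psi (x : ℝ) : ℝ := -x * Real.log x

open scoped Nat

lemma ones_le {n : ℕ} (η : Cfg n) : ones η ≤ n := by
  classical
  calc ones η ≤ ∑ _x : Fin n, 1 := Finset.sum_le_sum (by intro x _; split <;> simp)
  _ = n := by simp

lemma card_levelSet (n m : ℕ) : (levelSet n m).card = n.choose m := by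
  classical
  have h : (levelSet n m).card = (Finset.univ.powersetCard m (α := Fin n)).card := by
    apply Finset.card_bij (fun η _ => Finset.univ.filter (fun x => η x = true))
    · intro η hη
      rw [Finset.mem_powersetCard]
      constructor
      · exact Finset.filter_subset _ _
      · have hm : ones η = m := by simpa [levelSet] using hη
        rw [← hm, ones, Finset.card_filter]
    · intro η1 h1 η2 h2 heq
      funext x
      have := Finset.ext_iff.1 heq x
      simp only [Finset.mem_filter, Finset.mem_univ, true_and] at this
      by_cases h : η1 x
      · rw [h, (this.1 h)]
      · by_cases h' : η2 x
        · exact absurd (this.2 h') h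
        · rw [Bool.eq_false_iff.2 h, Bool.eq_false_iff.2 h']
    · intro s hs
      rw [Finset.mem_powersetCard] at hs
      refine ⟨fun x => x ∈ s, ?_, ?_⟩
      · simp only [levelSet, Finset.mem_filter, Finset.mem_univ, true_and]
        rw [ones, ← hs.2]
        simp only [decide_eq_true_eq]
        rw [← Finset.card_filter]
        congr 1
        ext x
        simp
      · ext x
        simp
  rw [h, Finset.card_powersetCard, Finset.card_univ, Fintype.card_fin]

lemma mbar_eq {n : ℕ} (η : Cfg n) : mbar η = (ones η : ℝ) - n / 2 := by
  classical
  have h1 : ((ones η : ℕ) : ℝ) = ∑ x, occ η x := by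
    rw [ones, Nat.cast_sum]
    apply Finset.sum_congr rfl
    intro x _
    by_cases h : η x = true <;> simp [h, occ]
  rw [mbar, Finset.sum_sub_distrib, ← h1, Finset.sum_const, Finset.card_univ, Fintype.card_fin]
  push_cast
  ring

lemma piBD_formula (θ : ℝ) (n m : ℕ) (hn : 0 < n) :
    piBD θ n m = (ZU θ n)⁻¹ * (((n.choose m : ℝ) / 2 ^ n) * Real.exp (n * U0 θ n (m / n))) := by
  classical
  have harg : ∀ η ∈ levelSet n m, nuU θ n η
      = (ZU θ n)⁻¹ * Real.exp (n * U0 θ n (m / n)) * (1 / 2 ^ n) := by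
    intro η hη
    have hm : ones η = m := by simpa [levelSet] using hη
    have hn' : (n : ℝ) ≠ 0 := Nat.cast_ne_zero.2 hn.ne'
    have : mbar η / n = (m : ℝ) / n - 1 / 2 := by
      rw [mbar_eq, hm, sub_div]
      congr 1
      rw [div_div, mul_comm (2:ℝ) (n:ℝ), ← div_div, div_self hn']
    rw [nuU, this, nuHalf, U0]
  rw [piBD, Finset.sum_congr rfl harg, Finset.sum_const, card_levelSet]
  push_cast
  ring

lemma ZU_formula (θ : ℝ) (n : ℕ) (hn : 0 < n) :
    ZU θ n = ∑ m ∈ Finset.range (n + 1), ((n.choose m : ℝ) / 2 ^ n) * Real.exp (n * U0 θ n (m / n)) := by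
  classical
  rw [ZU]
  rw [← Finset.sum_fiberwise_of_maps_to (g := fun η : Cfg n => ones η) (t := Finset.range (n+1))
    (fun η _ => Finset.mem_range.2 (Nat.lt_succ_of_le (ones_le η)))]
  apply Finset.sum_congr rfl
  intro m _
  have harg : ∀ η ∈ Finset.univ.filter (fun η : Cfg n => ones η = m),
      Real.exp (n * Ufun θ n (mbar η / n)) * nuHalf n η
      = Real.exp (n * U0 θ n (m / n)) * (1 / 2 ^ n) := by
    intro η hη
    have hm : ones η = m := by simpa using hη
    have hn' : (n : ℝ) ≠ 0 := Nat.cast_ne_zero.2 hn.ne'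
    have : mbar η / n = (m : ℝ) / n - 1 / 2 := by
      rw [mbar_eq, hm, sub_div]
      congr 1
      rw [div_div, mul_comm (2:ℝ) (n:ℝ), ← div_div, div_self hn']
    rw [this, nuHalf, U0]
  rw [Finset.sum_congr rfl harg, Finset.sum_const]
  have : (Finset.univ.filter (fun η : Cfg n => ones η = m)).card = n.choose m := card_levelSet n m
  rw [this]
  push_cast
  ring

lemma piTail_formula (θ : ℝ) (n l : ℕ) (hn : 0 < n) :
    piTail θ n l = (ZU θ n)⁻¹ *
      ∑ m ∈ Finset.Icc l n, ((n.choose m : ℝ) / 2 ^ n) * Real.exp (n * U0 θ n (m / n)) := by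
  rw [piTail, Finset.mul_sum]
  exact Finset.sum_congr rfl fun m _ => piBD_formula θ n m hn


lemma stirling_lb (k : ℕ) (hk : 1 ≤ k) :
    2 * Real.sqrt k * ((k : ℝ) / Real.exp 1) ^ k ≤ (k ! : ℝ) := by
  have hd : (0:ℝ) < Real.sqrt (2 * k) * ((k : ℝ) / Real.exp 1) ^ k := by
    have : (0:ℝ) < (k:ℝ) := by exact_mod_cast hk
    positivity
  have hs : Real.sqrt π ≤ Stirling.stirlingSeq k := by
    obtain ⟨j, rfl⟩ := Nat.exists_eq_add_of_le hk
    have := Stirling.stirlingSeq'_antitone.le_of_tendsto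
      (Stirling.tendsto_stirlingSeq_sqrt_pi.comp (Filter.tendsto_add_atTop_nat 1)) j
    simpa [Nat.succ_eq_add_one, Nat.add_comm] using this
  have heq : (k ! : ℝ) = Stirling.stirlingSeq k * (Real.sqrt (2 * k) * ((k : ℝ) / Real.exp 1) ^ k) := by
    rw [Stirling.stirlingSeq, div_mul_cancel₀]
    exact hd.ne'
  rw [heq]
  have h2 : Real.sqrt (2 * k) = Real.sqrt 2 * Real.sqrt k := by
    rw [← Real.sqrt_mul (by norm_num)]
  have hps : (2:ℝ) ≤ Real.sqrt π * Real.sqrt 2 := by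
    rw [← Real.sqrt_mul Real.pi_pos.le]
    have : (4:ℝ) ≤ π * 2 := by nlinarith [Real.pi_gt_three]
    calc (2:ℝ) = Real.sqrt 4 := by
          rw [show (4:ℝ) = 2^2 by norm_num, Real.sqrt_sq (by norm_num)]
      _ ≤ _ := Real.sqrt_le_sqrt this
  calc 2 * Real.sqrt k * ((k : ℝ) / Real.exp 1) ^ k
      ≤ (Real.sqrt π * Real.sqrt 2) * Real.sqrt k * ((k : ℝ) / Real.exp 1) ^ k := by
        have h3 : (0:ℝ) ≤ Real.sqrt k := Real.sqrt_nonneg _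
        have h4 : (0:ℝ) ≤ ((k : ℝ) / Real.exp 1) ^ k := by positivity
        nlinarith [mul_nonneg h3 h4]
    _ = Real.sqrt π * (Real.sqrt (2*k) * ((k : ℝ) / Real.exp 1) ^ k) := by rw [h2]; ring
    _ ≤ _ := by
        apply mul_le_mul_of_nonneg_right hs hd.le

lemma stirling_ub (k : ℕ) (hk : 1 ≤ k) :
    (k ! : ℝ) ≤ 3 * Real.sqrt k * ((k : ℝ) / Real.exp 1) ^ k := by
  have hd : (0:ℝ) < Real.sqrt (2 * k) * ((k : ℝ) / Real.exp 1) ^ k := by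
    have : (0:ℝ) < (k:ℝ) := by exact_mod_cast hk
    positivity
  have hs : Stirling.stirlingSeq k ≤ Real.exp 1 / Real.sqrt 2 := by
    obtain ⟨j, rfl⟩ := Nat.exists_eq_add_of_le hk
    have := Stirling.stirlingSeq'_antitone (Nat.zero_le j)
    simp only [Function.comp] at this
    calc Stirling.stirlingSeq (1 + j) = Stirling.stirlingSeq (j + 1) := by rw [Nat.add_comm]
      _ ≤ Stirling.stirlingSeq (0 + 1) := this
      _ = Real.exp 1 / Real.sqrt 2 := by norm_num [Stirling.stirlingSeq_one]
  have heq : (k ! : ℝ) = Stirling.stirlingSeq k * (Real.sqrt (2 * k) * ((k : ℝ) / Real.exp 1) ^ k) := by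
    rw [Stirling.stirlingSeq, div_mul_cancel₀]
    exact hd.ne'
  rw [heq]
  have h2 : Real.sqrt (2 * k) = Real.sqrt 2 * Real.sqrt k := by
    rw [← Real.sqrt_mul (by norm_num)]
  calc Stirling.stirlingSeq k * (Real.sqrt (2 * k) * ((k : ℝ) / Real.exp 1) ^ k)
      ≤ (Real.exp 1 / Real.sqrt 2) * (Real.sqrt (2 * k) * ((k : ℝ) / Real.exp 1) ^ k) :=
        mul_le_mul_of_nonneg_right hs hd.le
    _ = Real.exp 1 * Real.sqrt k * ((k : ℝ) / Real.exp 1) ^ k := by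
        rw [h2]
        have : Real.sqrt 2 ≠ 0 := by positivity
        field_simp
    _ ≤ 3 * Real.sqrt k * ((k : ℝ) / Real.exp 1) ^ k := by
        have h3 : (0:ℝ) ≤ Real.sqrt k := Real.sqrt_nonneg _
        have h4 : (0:ℝ) ≤ ((k : ℝ) / Real.exp 1) ^ k := by positivity
        have he : Real.exp 1 ≤ 3 := by
          have := Real.exp_one_lt_d9
          linarith
        nlinarith [mul_nonneg h3 h4]

lemma choose_mul_le_one (n m : ℕ) (hn : 0 < n) (h : m ≤ n) :
    (n.choose m : ℝ) * (((m:ℝ)/n)^m * (((n:ℝ) - m)/n)^(n-m)) ≤ 1 := by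
  have hn' : (0:ℝ) < n := by exact_mod_cast hn
  set p : ℝ := (m:ℝ)/n with hp
  set q : ℝ := ((n:ℝ) - m)/n with hq
  have hp0 : 0 ≤ p := by positivity
  have hq0 : 0 ≤ q := by
    apply div_nonneg _ hn'.le
    have : (m:ℝ) ≤ n := by exact_mod_cast h
    linarith
  have hpq : p + q = 1 := by
    rw [hp, hq]
    field_simp
    ring
  calc (n.choose m : ℝ) * (p^m * q^(n-m)) = p^m * q^(n-m) * (n.choose m : ℝ) := by ring
    _ ≤ ∑ k ∈ Finset.range (n+1), p^k * q^(n-k) * (n.choose k : ℝ) := by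
        apply Finset.single_le_sum (f := fun k => p^k * q^(n-k) * (n.choose k : ℝ))
        · intro k _
          positivity
        · exact Finset.mem_range.2 (Nat.lt_succ_of_le h)
    _ = (p + q)^n := (add_pow p q n).symm
    _ = 1 := by rw [hpq, one_pow]

lemma key_pow (m k : ℕ) (hm : 0 < m) (hk : 0 < k) :
    (((m+k : ℕ):ℝ)/Real.exp 1)^(m+k) * (((m:ℝ)/((m+k:ℕ):ℝ))^m * ((k:ℝ)/((m+k:ℕ):ℝ))^k)
      = ((m:ℝ)/Real.exp 1)^m * ((k:ℝ)/Real.exp 1)^k := by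
  have hn' : (0:ℝ) < ((m+k:ℕ):ℝ) := by positivity
  have he : Real.exp 1 ≠ 0 := (Real.exp_pos 1).ne'
  rw [pow_add]
  have e1 : (((m+k:ℕ):ℝ)/Real.exp 1)^m * ((m:ℝ)/((m+k:ℕ):ℝ))^m = ((m:ℝ)/Real.exp 1)^m := by
    rw [← mul_pow]
    congr 1
    field_simp
  have e2 : (((m+k:ℕ):ℝ)/Real.exp 1)^k * ((k:ℝ)/((m+k:ℕ):ℝ))^k = ((k:ℝ)/Real.exp 1)^k := by
    rw [← mul_pow]
    congr 1
    field_simp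
  calc (((m+k:ℕ):ℝ)/Real.exp 1)^m * (((m+k:ℕ):ℝ)/Real.exp 1)^k *
        (((m:ℝ)/((m+k:ℕ):ℝ))^m * ((k:ℝ)/((m+k:ℕ):ℝ))^k)
      = ((((m+k:ℕ):ℝ)/Real.exp 1)^m * ((m:ℝ)/((m+k:ℕ):ℝ))^m) *
        ((((m+k:ℕ):ℝ)/Real.exp 1)^k * ((k:ℝ)/((m+k:ℕ):ℝ))^k) := by ring
    _ = _ := by rw [e1, e2]

lemma choose_bounds (n m : ℕ) (h0 : 0 < m) (h1 : m < n) :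
    (2/9) * (Real.sqrt n / (Real.sqrt m * Real.sqrt (n-m : ℕ)))
      ≤ (n.choose m : ℝ) * (((m:ℝ)/n)^m * (((n:ℝ) - m)/n)^(n-m))
    ∧ (n.choose m : ℝ) * (((m:ℝ)/n)^m * (((n:ℝ) - m)/n)^(n-m))
      ≤ (3/4) * (Real.sqrt n / (Real.sqrt m * Real.sqrt (n-m : ℕ))) := by
  set k := n - m with hkdef
  have hkn : m + k = n := Nat.add_sub_cancel' h1.le
  have hk0 : 0 < k := by omega
  have hn0 : 0 < n := by omega
  have hcast : ((n:ℝ) - m) = ((k:ℕ):ℝ) := by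
    rw [hkdef]
    push_cast [Nat.cast_sub h1.le]
    ring
  have hA : (0:ℝ) < ((m:ℝ)/Real.exp 1)^m * ((k:ℝ)/Real.exp 1)^k := by
    have h1 : (0:ℝ) < (m:ℝ) := by exact_mod_cast h0
    have h2 : (0:ℝ) < (k:ℝ) := by exact_mod_cast hk0
    positivity
  set A : ℝ := ((m:ℝ)/Real.exp 1)^m * ((k:ℝ)/Real.exp 1)^k with hAdef
  have hq : (0:ℝ) ≤ ((m:ℝ)/n)^m * (((n:ℝ) - m)/n)^(n-m) := by
    rw [hcast]
    positivity
  have hkey : ((n:ℝ)/Real.exp 1)^n * (((m:ℝ)/n)^m * (((n:ℝ) - m)/n)^(n-m)) = A := by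
    rw [hcast, hAdef, ← hkn]
    have := key_pow m k h0 hk0
    convert this using 4 <;> rw [hkn]
  have hfm : (0:ℝ) < (m ! : ℝ) := by exact_mod_cast Nat.factorial_pos m
  have hfk : (0:ℝ) < (k ! : ℝ) := by exact_mod_cast Nat.factorial_pos k
  have hchoose : (n.choose m : ℝ) = (n ! : ℝ) / ((m ! : ℝ) * (k ! : ℝ)) := by
    rw [Nat.cast_choose ℝ h1.le, hkdef]
  have hnum_lb : 2 * Real.sqrt n * A ≤ (n ! : ℝ) * (((m:ℝ)/n)^m * (((n:ℝ) - m)/n)^(n-m)) := by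
    calc 2 * Real.sqrt n * A
        = (2 * Real.sqrt n * ((n:ℝ)/Real.exp 1)^n) * (((m:ℝ)/n)^m * (((n:ℝ) - m)/n)^(n-m)) := by
          rw [← hkey]; ring
      _ ≤ _ := mul_le_mul_of_nonneg_right (stirling_lb n hn0) hq
  have hnum_ub : (n ! : ℝ) * (((m:ℝ)/n)^m * (((n:ℝ) - m)/n)^(n-m)) ≤ 3 * Real.sqrt n * A := by
    calc (n ! : ℝ) * (((m:ℝ)/n)^m * (((n:ℝ) - m)/n)^(n-m))
        ≤ (3 * Real.sqrt n * ((n:ℝ)/Real.exp 1)^n) * (((m:ℝ)/n)^m * (((n:ℝ) - m)/n)^(n-m)) :=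
          mul_le_mul_of_nonneg_right (stirling_ub n hn0) hq
      _ = 3 * Real.sqrt n * A := by rw [← hkey]; ring
  have hden_ub : (m ! : ℝ) * (k ! : ℝ) ≤ 9 * (Real.sqrt m * Real.sqrt k) * A := by
    calc (m ! : ℝ) * (k ! : ℝ)
        ≤ (3 * Real.sqrt m * ((m:ℝ)/Real.exp 1)^m) * (3 * Real.sqrt k * ((k:ℝ)/Real.exp 1)^k) := by
          apply mul_le_mul (stirling_ub m h0) (stirling_ub k hk0) hfk.le
          have h1 : (0:ℝ) < (m:ℝ) := by exact_mod_cast h0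
          positivity
      _ = 9 * (Real.sqrt m * Real.sqrt k) * A := by rw [hAdef]; ring
  have hden_lb : 4 * (Real.sqrt m * Real.sqrt k) * A ≤ (m ! : ℝ) * (k ! : ℝ) := by
    calc 4 * (Real.sqrt m * Real.sqrt k) * A
        = (2 * Real.sqrt m * ((m:ℝ)/Real.exp 1)^m) * (2 * Real.sqrt k * ((k:ℝ)/Real.exp 1)^k) := by
          rw [hAdef]; ring
      _ ≤ (m ! : ℝ) * (k ! : ℝ) := by
          apply mul_le_mul (stirling_lb m h0) (stirling_lb k hk0) _ hfm.le
          have h2 : (0:ℝ) < (k:ℝ) := by exact_mod_cast hk0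
          positivity
  have hsm : (0:ℝ) < Real.sqrt m := Real.sqrt_pos.2 (by exact_mod_cast h0)
  have hsk : (0:ℝ) < Real.sqrt k := Real.sqrt_pos.2 (by exact_mod_cast hk0)
  have hsn : (0:ℝ) ≤ Real.sqrt n := Real.sqrt_nonneg _
  have hrw : (n.choose m : ℝ) * (((m:ℝ)/n)^m * (((n:ℝ) - m)/n)^(n-m))
      = ((n ! : ℝ) * (((m:ℝ)/n)^m * (((n:ℝ) - m)/n)^(n-m))) / ((m ! : ℝ) * (k ! : ℝ)) := by
    rw [hchoose]; ring
  constructor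
  · rw [hrw]
    have e1 : (2/9) * (Real.sqrt n / (Real.sqrt m * Real.sqrt k))
        = (2 * Real.sqrt n * A) / (9 * (Real.sqrt m * Real.sqrt k) * A) := by
      rw [mul_div_mul_right _ _ hA.ne']
      field_simp
    rw [e1]
    apply div_le_div₀ (by positivity) hnum_lb (by positivity) hden_ub
  · rw [hrw]
    have e2 : (3/4) * (Real.sqrt n / (Real.sqrt m * Real.sqrt k))
        = (3 * Real.sqrt n * A) / (4 * (Real.sqrt m * Real.sqrt k) * A) := by
      rw [mul_div_mul_right _ _ hA.ne']
      field_simp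
    rw [e2]
    apply div_le_div₀ (by positivity) hnum_ub (by positivity) hden_lb


-- exp identity
lemma q_eq_exp (n m : ℕ) (h0 : 0 < m) (h1 : m ≤ n) :
    Real.exp ((n : ℝ) * Efun ((m:ℝ)/n)) = 2^n * (((m:ℝ)/n)^m * (((n:ℝ) - m)/n)^(n-m)) := by
  have hn0 : 0 < n := lt_of_lt_of_le h0 h1
  have hn' : (0:ℝ) < (n:ℝ) := by exact_mod_cast hn0
  have hp : (0:ℝ) < (m:ℝ)/n := by
    have : (0:ℝ) < (m:ℝ) := by exact_mod_cast h0
    positivity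
  have h1p : 1 - (m:ℝ)/n = ((n:ℝ) - m)/n := by field_simp
  rcases eq_or_lt_of_le h1 with he | hlt
  · subst he
    have : Efun ((m:ℝ)/m) = Real.log 2 := by
      rw [div_self (by exact_mod_cast h0.ne' : (m:ℝ) ≠ 0)]
      simp [Efun]
    rw [this]
    rw [Real.exp_nat_mul, Real.exp_log (by norm_num)]
    simp [div_self (show (m:ℝ) ≠ 0 from by exact_mod_cast h0.ne')]
  · have hq : (0:ℝ) < ((n:ℝ) - m)/n := by
      have : (m:ℝ) < (n:ℝ) := by exact_mod_cast hlt
      have : (0:ℝ) < (n:ℝ) - m := by linarith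
      positivity
    have hEe : (n:ℝ) * Efun ((m:ℝ)/n)
        = m * Real.log ((m:ℝ)/n) + ((n-m : ℕ):ℝ) * Real.log (((n:ℝ) - m)/n) + n * Real.log 2 := by
      rw [Efun, h1p]
      have e1 : (n:ℝ) * ((m:ℝ)/n) = m := by field_simp
      have e2 : (n:ℝ) * (((n:ℝ) - m)/n) = ((n-m:ℕ):ℝ) := by
        rw [Nat.cast_sub h1]
        field_simp
      calc (n:ℝ) * ((m:ℝ)/n * Real.log ((m:ℝ)/n) + ((n:ℝ) - m)/n * Real.log (((n:ℝ) - m)/n) + Real.log 2)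
          = ((n:ℝ) * ((m:ℝ)/n)) * Real.log ((m:ℝ)/n)
            + ((n:ℝ) * (((n:ℝ) - m)/n)) * Real.log (((n:ℝ) - m)/n) + (n:ℝ) * Real.log 2 := by ring
        _ = _ := by rw [e1, e2]
    rw [hEe, Real.exp_add, Real.exp_add, Real.exp_nat_mul, Real.exp_nat_mul, Real.exp_nat_mul,
      Real.exp_log hp, Real.exp_log hq, Real.exp_log (by norm_num : (0:ℝ) < 2)]
    ring

lemma term_eq (θ : ℝ) (n m : ℕ) (h0 : 0 < m) (h1 : m ≤ n) :
    ((n.choose m : ℝ)/2^n) * Real.exp ((n:ℝ) * U0 θ n ((m:ℝ)/n))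
      = ((n.choose m : ℝ) * (((m:ℝ)/n)^m * (((n:ℝ) - m)/n)^(n-m)))
        * Real.exp (-((n:ℝ) * Wfun θ n ((m:ℝ)/n))) := by
  have h2 : (0:ℝ) < 2^n := by positivity
  rw [Wfun]
  rw [show -((n:ℝ) * (Efun ((m:ℝ)/n) - U0 θ n ((m:ℝ)/n)))
      = -((n:ℝ) * Efun ((m:ℝ)/n)) + (n:ℝ) * U0 θ n ((m:ℝ)/n) by ring]
  rw [Real.exp_add]
  have hq := q_eq_exp n m h0 h1
  have : (((m:ℝ)/n)^m * (((n:ℝ) - m)/n)^(n-m)) = Real.exp ((n : ℝ) * Efun ((m:ℝ)/n)) / 2^n := by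
    rw [hq, mul_div_cancel_left₀ _ h2.ne']
  rw [this]
  rw [Real.exp_neg]
  have hE : Real.exp ((n : ℝ) * Efun ((m:ℝ)/n)) ≠ 0 := (Real.exp_pos _).ne'
  field_simp

-- derivative of Efun
lemma hasDerivAt_Efun (ρ : ℝ) (h0 : 0 < ρ) (h1 : ρ < 1) :
    HasDerivAt Efun (Real.log ρ - Real.log (1-ρ)) ρ := by
  have d1 : HasDerivAt (fun x : ℝ => x * Real.log x) (Real.log ρ + 1) ρ :=
    Real.hasDerivAt_mul_log h0.ne'
  have dinner : HasDerivAt (fun x : ℝ => 1 - x) (-1 : ℝ) ρ := by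
    simpa using (hasDerivAt_id ρ).const_sub 1
  have d2' : HasDerivAt (fun x : ℝ => (1-x) * Real.log (1-x)) ((Real.log (1-ρ) + 1) * (-1)) ρ := by
    exact (Real.hasDerivAt_mul_log (by linarith : (1:ℝ) - ρ ≠ 0)).comp ρ dinner
  have := (d1.add d2').add_const (Real.log 2)
  exact this.congr_deriv (by ring)

-- derivative of U0
lemma hasDerivAt_U0 (θ : ℝ) (n : ℕ) (ρ : ℝ) (hg : gam θ n ≠ 0)
    (ha : 1 + 2 * gam θ n * (ρ - 1/2) ≠ 0) (hb : 1 - 2 * gam θ n * (ρ - 1/2) ≠ 0) :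
    HasDerivAt (U0 θ n)
      (2 * (Real.log (1 + 2 * gam θ n * (ρ - 1/2)) - Real.log (1 - 2 * gam θ n * (ρ - 1/2)))) ρ := by
  set g := gam θ n with hgdef
  have dA : HasDerivAt (fun x : ℝ => 1 + 2 * g * (x - 1/2)) (2*g) ρ := by
    exact ((((hasDerivAt_id' ρ).sub_const (1/2)).const_mul (2*g)).const_add 1).congr_deriv (by ring)
  have dB : HasDerivAt (fun x : ℝ => 1 - 2 * g * (x - 1/2)) (-(2*g)) ρ := by
    exact ((((hasDerivAt_id' ρ).sub_const (1/2)).const_mul (2*g)).const_sub 1).congr_deriv (by ring)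
  have d1 : HasDerivAt (fun x : ℝ => (1 + 2*g*(x-1/2)) * Real.log (1 + 2*g*(x-1/2)))
      ((Real.log (1 + 2*g*(ρ-1/2)) + 1) * (2*g)) ρ :=
    by exact (Real.hasDerivAt_mul_log ha).comp ρ dA
  have d2 : HasDerivAt (fun x : ℝ => (1 - 2*g*(x-1/2)) * Real.log (1 - 2*g*(x-1/2)))
      ((Real.log (1 - 2*g*(ρ-1/2)) + 1) * (-(2*g))) ρ :=
    by exact (Real.hasDerivAt_mul_log hb).comp ρ dB
  have := (d1.add d2).const_mul g⁻¹
  have heq : U0 θ n = fun x : ℝ => g⁻¹ * ((1 + 2*g*(x-1/2)) * Real.log (1 + 2*g*(x-1/2))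
      + (1 - 2*g*(x-1/2)) * Real.log (1 - 2*g*(x-1/2))) := by
    funext x
    rw [U0, Ufun]
  rw [heq]
  refine this.congr_deriv ?_
  field_simp
  ring

lemma hasDerivAt_Wfun (θ : ℝ) (n : ℕ) (ρ : ℝ) (h0 : 0 < ρ) (h1 : ρ < 1) (hg : gam θ n ≠ 0)
    (ha : 1 + 2 * gam θ n * (ρ - 1/2) ≠ 0) (hb : 1 - 2 * gam θ n * (ρ - 1/2) ≠ 0) :
    HasDerivAt (Wfun θ n)
      ((Real.log ρ - Real.log (1-ρ))
        - 2 * (Real.log (1 + 2 * gam θ n * (ρ - 1/2)) - Real.log (1 - 2 * gam θ n * (ρ - 1/2)))) ρ := by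
  have : Wfun θ n = fun x => Efun x - U0 θ n x := rfl
  rw [this]
  exact (hasDerivAt_Efun ρ h0 h1).sub (hasDerivAt_U0 θ n ρ hg ha hb)

lemma Wfun_half (θ : ℝ) (n : ℕ) : Wfun θ n (1/2 : ℝ) = 0 := by
  have h1 : Efun (1/2 : ℝ) = 0 := by
    rw [Efun]
    rw [show (1:ℝ) - 1/2 = 1/2 by norm_num]
    rw [show Real.log (1/2 : ℝ) = - Real.log 2 by rw [one_div, Real.log_inv]]
    ring
  have h2 : U0 θ n (1/2 : ℝ) = 0 := by
    rw [U0, Ufun]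
    norm_num
  rw [Wfun, h1, h2]
  ring


def hfun (t : ℝ) : ℝ := Real.log (1 + 2*t) - Real.log (1 - 2*t)

lemma log_sub_log_le (x y c : ℝ) (hc : 0 < c) (hy : c ≤ y) (hxy : y ≤ x) :
    Real.log x - Real.log y ≤ (x - y)/c := by
  have hy0 : 0 < y := lt_of_lt_of_le hc hy
  have hx0 : 0 < x := lt_of_lt_of_le hy0 hxy
  have h1 : Real.log x - Real.log y = Real.log (x/y) := (Real.log_div hx0.ne' hy0.ne').symm
  rw [h1]
  have h2 : Real.log (x/y) ≤ x/y - 1 := Real.log_le_sub_one_of_pos (by positivity)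
  have h3 : x/y - 1 = (x - y)/y := by field_simp
  have h4 : (x-y)/y ≤ (x-y)/c := by
    apply div_le_div_of_nonneg_left (by linarith) hc hy
  linarith
  
lemma log_sub_log_ge (x y c : ℝ) (hc : 0 < c) (hy : 0 < y) (hx : c ≤ x) (hxy : y ≤ x) :
    (x - y)/x ≤ Real.log x - Real.log y := by
  have hx0 : 0 < x := lt_of_lt_of_le hc hx
  have h2 : Real.log (y/x) ≤ y/x - 1 := Real.log_le_sub_one_of_pos (by positivity)
  have h1 : Real.log (y/x) = Real.log y - Real.log x := Real.log_div hy.ne' hx0.ne'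
  have h3 : y/x - 1 = -((x - y)/x) := by field_simp; ring
  rw [h1, h3] at h2
  linarith

-- B1
lemma hfun_B1 (ϱ : ℝ) (h0 : 0 ≤ ϱ) (h2 : ϱ < 1/2) :
    4*ϱ^3 ≤ hfun ϱ - 2 * hfun (ϱ/2) := by
  have ha1 : (0:ℝ) < 1 + 2*ϱ := by linarith
  have ha2 : (0:ℝ) < 1 - ϱ := by linarith
  have ha3 : (0:ℝ) < 1 - 2*ϱ := by linarith
  have ha4 : (0:ℝ) < 1 + ϱ := by linarith
  have hA : (0:ℝ) < (1+2*ϱ)*(1-ϱ)^2 := mul_pos ha1 (pow_pos ha2 2)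
  have hB : (0:ℝ) < (1-2*ϱ)*(1+ϱ)^2 := mul_pos ha3 (pow_pos ha4 2)
  have hid : hfun ϱ - 2*hfun (ϱ/2)
      = Real.log ((1+2*ϱ)*(1-ϱ)^2) - Real.log ((1-2*ϱ)*(1+ϱ)^2) := by
    rw [hfun, hfun]
    rw [Real.log_mul ha1.ne' (pow_pos ha2 2).ne', Real.log_mul ha3.ne' (pow_pos ha4 2).ne',
      Real.log_pow, Real.log_pow]
    have e1 : 1 + 2*(ϱ/2) = 1 + ϱ := by ring
    have e2 : 1 - 2*(ϱ/2) = 1 - ϱ := by ring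
    rw [e1, e2]
    push_cast
    ring
  rw [hid]
  have hd : (1+2*ϱ)*(1-ϱ)^2 - (1-2*ϱ)*(1+ϱ)^2 = 4*ϱ^3 := by ring
  have hord : (1-2*ϱ)*(1+ϱ)^2 ≤ (1+2*ϱ)*(1-ϱ)^2 := by nlinarith [pow_nonneg h0 3]
  have := log_sub_log_ge ((1+2*ϱ)*(1-ϱ)^2) ((1-2*ϱ)*(1+ϱ)^2) ((1+2*ϱ)*(1-ϱ)^2)
    hA hB le_rfl hord
  rw [hd] at this
  have hA1 : (1+2*ϱ)*(1-ϱ)^2 ≤ 1 := by nlinarith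
  have h4 : 4*ϱ^3 ≤ 4*ϱ^3 / ((1+2*ϱ)*(1-ϱ)^2) := by
    rw [le_div_iff₀ hA]
    nlinarith
  linarith

-- B2
lemma hfun_B2 (ϱ : ℝ) (h0 : 0 ≤ ϱ) (h2 : ϱ ≤ 1/4) :
    hfun ϱ - 2 * hfun (ϱ/2) ≤ 8*ϱ^3 := by
  have ha1 : (0:ℝ) < 1 + 2*ϱ := by linarith
  have ha2 : (0:ℝ) < 1 - ϱ := by linarith
  have ha3 : (0:ℝ) < 1 - 2*ϱ := by linarith
  have ha4 : (0:ℝ) < 1 + ϱ := by linarith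
  have hA : (0:ℝ) < (1+2*ϱ)*(1-ϱ)^2 := mul_pos ha1 (pow_pos ha2 2)
  have hB : (0:ℝ) < (1-2*ϱ)*(1+ϱ)^2 := mul_pos ha3 (pow_pos ha4 2)
  have hid : hfun ϱ - 2*hfun (ϱ/2)
      = Real.log ((1+2*ϱ)*(1-ϱ)^2) - Real.log ((1-2*ϱ)*(1+ϱ)^2) := by
    rw [hfun, hfun]
    rw [Real.log_mul ha1.ne' (pow_pos ha2 2).ne', Real.log_mul ha3.ne' (pow_pos ha4 2).ne',
      Real.log_pow, Real.log_pow]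
    have e1 : 1 + 2*(ϱ/2) = 1 + ϱ := by ring
    have e2 : 1 - 2*(ϱ/2) = 1 - ϱ := by ring
    rw [e1, e2]
    push_cast
    ring
  rw [hid]
  have hord : (1-2*ϱ)*(1+ϱ)^2 ≤ (1+2*ϱ)*(1-ϱ)^2 := by nlinarith [pow_nonneg h0 3]
  have hBhalf : (1:ℝ)/2 ≤ (1-2*ϱ)*(1+ϱ)^2 := by nlinarith
  have := log_sub_log_le ((1+2*ϱ)*(1-ϱ)^2) ((1-2*ϱ)*(1+ϱ)^2) (1/2)
    (by norm_num) hBhalf hord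
  have hd : (1+2*ϱ)*(1-ϱ)^2 - (1-2*ϱ)*(1+ϱ)^2 = 4*ϱ^3 := by ring
  rw [hd] at this
  linarith

-- Lipschitz bound for hfun on [0, 0.28]
lemma hfun_lip (a b : ℝ) (hb0 : 0 ≤ b) (hba : b ≤ a) (ha : a ≤ 0.28) :
    0 ≤ hfun a - hfun b ∧ hfun a - hfun b ≤ 7*(a-b) := by
  have h1a : (0:ℝ) < 1 + 2*a := by linarith
  have h1b : (0:ℝ) < 1 + 2*b := by linarith
  have h2a : (0:ℝ) < 1 - 2*a := by linarith
  have h2b : (0:ℝ) < 1 - 2*b := by linarith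
  have e1 : Real.log (1+2*b) ≤ Real.log (1+2*a) :=
    Real.log_le_log h1b (by linarith)
  have e2 : Real.log (1-2*a) ≤ Real.log (1-2*b) :=
    Real.log_le_log h2a (by linarith)
  constructor
  · rw [hfun, hfun]; linarith
  · have d1 : Real.log (1+2*a) - Real.log (1+2*b) ≤ ((1+2*a)-(1+2*b))/1 :=
      log_sub_log_le _ _ 1 (by norm_num) (by linarith) (by linarith)
    have d2 : Real.log (1-2*b) - Real.log (1-2*a) ≤ ((1-2*b)-(1-2*a))/(0.44 : ℝ) :=
      log_sub_log_le _ _ 0.44 (by norm_num) (by linarith) (by linarith)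
    rw [hfun, hfun]
    have : ((1+2*a)-(1+2*b))/1 = 2*(a-b) := by ring
    rw [this] at d1
    have : ((1-2*b)-(1-2*a))/(0.44:ℝ) = (2/0.44)*(a-b) := by ring
    rw [this] at d2
    have hab : 0 ≤ a - b := by linarith
    nlinarith

lemma hfun_close (a b : ℝ) (h0a : 0 ≤ a) (h0b : 0 ≤ b) (ha : a ≤ 0.28) (hb : b ≤ 0.28) :
    |hfun a - hfun b| ≤ 7*|a-b| := by
  rcases le_total b a with h | h
  · obtain ⟨h1, h2⟩ := hfun_lip a b h0b h ha
    rw [abs_of_nonneg h1, abs_of_nonneg (by linarith : (0:ℝ) ≤ a - b)]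
    exact h2
  · obtain ⟨h1, h2⟩ := hfun_lip b a h0a h hb
    rw [abs_sub_comm, abs_sub_comm a b]
    rw [abs_of_nonneg h1, abs_of_nonneg (by linarith : (0:ℝ) ≤ b - a)]
    exact h2


lemma WD_eq (θ : ℝ) (n : ℕ) (ρ : ℝ) (h12 : 1/2 < ρ) (h1 : ρ < 1)
    (hγl : (0.45:ℝ) ≤ gam θ n) (hγu : gam θ n ≤ 0.55) :
    (Real.log ρ - Real.log (1-ρ))
      - 2 * (Real.log (1 + 2 * gam θ n * (ρ - 1/2)) - Real.log (1 - 2 * gam θ n * (ρ - 1/2)))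
    = hfun (ρ - 1/2) - 2 * hfun (gam θ n * (ρ - 1/2)) := by
  have e1 : ρ = (1 + 2*(ρ - 1/2))/2 := by ring
  have l1 : Real.log ρ = Real.log (1+2*(ρ-1/2)) - Real.log 2 := by
    rw [show (1:ℝ)+2*(ρ-1/2) = 2*ρ by ring, Real.log_mul (by norm_num) (by linarith)]
    ring
  have l2 : Real.log (1-ρ) = Real.log (1-2*(ρ-1/2)) - Real.log 2 := by
    rw [show (1:ℝ)-2*(ρ-1/2) = 2*(1-ρ) by ring, Real.log_mul (by norm_num) (by linarith)]
    ring
  have e3 : (1 : ℝ) + 2 * (gam θ n * (ρ-1/2)) = 1 + 2 * gam θ n * (ρ-1/2) := by ring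
  have e4 : (1 : ℝ) - 2 * (gam θ n * (ρ-1/2)) = 1 - 2 * gam θ n * (ρ-1/2) := by ring
  rw [hfun, hfun, e3, e4, l1, l2]
  ring

lemma W_slope (θ : ℝ) (n : ℕ) (hγl : (0.45:ℝ) ≤ gam θ n) (hγu : gam θ n ≤ 0.55)
    (a b : ℝ) (hab : a < b) (ha : 1/2 ≤ a) (hb : b ≤ 1) :
    ∃ ρ ∈ Set.Ioo a b,
      Wfun θ n b - Wfun θ n a = (hfun (ρ - 1/2) - 2 * hfun (gam θ n * (ρ - 1/2))) * (b - a) := by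
  have hg0 : (0:ℝ) < gam θ n := by linarith
  have hargs : ∀ ρ : ℝ, 1/2 ≤ ρ → ρ ≤ 1 →
      (1 + 2 * gam θ n * (ρ - 1/2) ≠ 0) ∧ (1 - 2 * gam θ n * (ρ - 1/2) ≠ 0) := by
    intro ρ hρ1 hρ2
    have hnn : (0:ℝ) ≤ 2 * gam θ n * (ρ - 1/2) :=
      mul_nonneg (by linarith) (by linarith)
    have hub : 2 * gam θ n * (ρ - 1/2) ≤ 0.55 := by nlinarith
    constructor
    · intro hcon; linarith
    · intro hcon
      have : 2 * gam θ n * (ρ - 1/2) = 1 := by linarith [hcon.le, hcon.ge]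
      linarith
  have cE : Continuous Efun := by
    unfold Efun
    exact ((Real.continuous_mul_log).add
      ((Real.continuous_mul_log).comp (continuous_const.sub continuous_id))).add continuous_const
  have hcont : ContinuousOn (Wfun θ n) (Set.Icc a b) := by
    intro ρ hρ
    obtain ⟨hh1, hh2⟩ := hargs ρ (le_trans ha hρ.1) (le_trans hρ.2 hb)
    have hU := hasDerivAt_U0 θ n ρ hg0.ne' hh1 hh2
    exact ((cE.continuousAt).sub hU.continuousAt).continuousWithinAt
  have hderiv : ∀ ρ ∈ Set.Ioo a b, HasDerivAt (Wfun θ n)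
      ((Real.log ρ - Real.log (1-ρ))
        - 2 * (Real.log (1 + 2 * gam θ n * (ρ - 1/2)) - Real.log (1 - 2 * gam θ n * (ρ - 1/2)))) ρ := by
    intro ρ hρ
    obtain ⟨hh1, hh2⟩ := hargs ρ (le_trans ha hρ.1.le) (le_trans hρ.2.le hb)
    exact hasDerivAt_Wfun θ n ρ (by linarith [hρ.1, ha]) (lt_of_lt_of_le hρ.2 hb) hg0.ne' hh1 hh2
  obtain ⟨ρ, hρmem, hρeq⟩ := exists_hasDerivAt_eq_slope (Wfun θ n) _ hab hcont hderiv
  refine ⟨ρ, hρmem, ?_⟩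
  have h12 : 1/2 < ρ := lt_of_le_of_lt ha hρmem.1
  have h1 : ρ < 1 := lt_of_lt_of_le hρmem.2 hb
  rw [← WD_eq θ n ρ h12 h1 hγl hγu, hρeq, div_mul_cancel₀ _ (sub_ne_zero.2 hab.ne')]

lemma W_step_ge (θ : ℝ) (n : ℕ) (hγl : (0.45:ℝ) ≤ gam θ n) (hγu : gam θ n ≤ 0.55)
    (ε : ℝ) (hge : |gam θ n - 1/2| ≤ ε)
    (a b : ℝ) (hab : a < b) (ha : 1/2 < a) (hb : b ≤ 1)
    (hsmall : 14 * ε ≤ 3 * (a - 1/2)^2) :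
    (a - 1/2)^3 * (b - a) ≤ Wfun θ n b - Wfun θ n a := by
  obtain ⟨ρ, hρmem, hρeq⟩ := W_slope θ n hγl hγu a b hab ha.le hb
  obtain ⟨hm1, hm2⟩ := hρmem
  have hϱa : a - 1/2 < ρ - 1/2 := by linarith
  have hϱ0 : (0:ℝ) < ρ - 1/2 := by linarith
  have hϱ2 : ρ - 1/2 < 1/2 := by linarith [lt_of_lt_of_le hm2 hb]
  have hε0 : 0 ≤ ε := le_trans (abs_nonneg _) hge
  have hclose : |hfun (gam θ n * (ρ-1/2)) - hfun ((ρ-1/2)/2)| ≤ 7 * (ε * (ρ-1/2)) := by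
    have h1 : |gam θ n * (ρ-1/2) - (ρ-1/2)/2| ≤ ε * (ρ-1/2) := by
      rw [show gam θ n * (ρ-1/2) - (ρ-1/2)/2 = (gam θ n - 1/2) * (ρ-1/2) by ring,
        abs_mul, abs_of_nonneg hϱ0.le]
      exact mul_le_mul_of_nonneg_right hge hϱ0.le
    calc |hfun (gam θ n * (ρ-1/2)) - hfun ((ρ-1/2)/2)|
        ≤ 7*|gam θ n * (ρ-1/2) - (ρ-1/2)/2| := by
          apply hfun_close _ _ (by positivity) (by positivity) (by nlinarith) (by nlinarith)
      _ ≤ 7*(ε*(ρ-1/2)) := by linarith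
  have hB1 := hfun_B1 (ρ-1/2) hϱ0.le hϱ2
  obtain ⟨habs1, habs2⟩ := abs_le.1 hclose
  have hD : (a - 1/2)^3 ≤ hfun (ρ-1/2) - 2 * hfun (gam θ n * (ρ-1/2)) := by
    have hsq : (a-1/2)^2 ≤ (ρ-1/2)^2 := pow_le_pow_left₀ (by linarith) hϱa.le 2
    have h2 : 14*(ε*(ρ-1/2)) ≤ 3*(ρ-1/2)^2*(ρ-1/2) := by
      nlinarith [mul_le_mul_of_nonneg_right hsmall hϱ0.le, mul_le_mul_of_nonneg_right hsq hϱ0.le]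
    have h3 : (a-1/2)^3 ≤ (ρ-1/2)^3 := pow_le_pow_left₀ (by linarith) hϱa.le 3
    nlinarith
  rw [hρeq]
  exact mul_le_mul_of_nonneg_right hD (by linarith)

lemma W_le_quartic (θ : ℝ) (n : ℕ) (hγl : (0.45:ℝ) ≤ gam θ n) (hγu : gam θ n ≤ 0.55)
    (ε : ℝ) (hge : |gam θ n - 1/2| ≤ ε)
    (b : ℝ) (hb1 : 1/2 < b) (hb2 : b ≤ 3/4) :
    Wfun θ n b ≤ 8*(b-1/2)^4 + 14*ε*(b-1/2)^2 := by
  obtain ⟨ρ, hρmem, hρeq⟩ := W_slope θ n hγl hγu (1/2) b hb1 le_rfl (by linarith)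
  obtain ⟨hm1, hm2⟩ := hρmem
  have hϱ0 : (0:ℝ) < ρ - 1/2 := by linarith
  have hϱb : ρ - 1/2 < b - 1/2 := by linarith
  have hϱ4 : ρ - 1/2 ≤ 1/4 := by linarith
  have hε0 : 0 ≤ ε := le_trans (abs_nonneg _) hge
  have hclose : |hfun (gam θ n * (ρ-1/2)) - hfun ((ρ-1/2)/2)| ≤ 7 * (ε * (ρ-1/2)) := by
    have h1 : |gam θ n * (ρ-1/2) - (ρ-1/2)/2| ≤ ε * (ρ-1/2) := by
      rw [show gam θ n * (ρ-1/2) - (ρ-1/2)/2 = (gam θ n - 1/2) * (ρ-1/2) by ring,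
        abs_mul, abs_of_nonneg hϱ0.le]
      exact mul_le_mul_of_nonneg_right hge hϱ0.le
    calc |hfun (gam θ n * (ρ-1/2)) - hfun ((ρ-1/2)/2)|
        ≤ 7*|gam θ n * (ρ-1/2) - (ρ-1/2)/2| := by
          apply hfun_close _ _ (by positivity) (by positivity) (by nlinarith) (by nlinarith)
      _ ≤ 7*(ε*(ρ-1/2)) := by linarith
  have hB2 := hfun_B2 (ρ-1/2) hϱ0.le hϱ4
  obtain ⟨habs1, habs2⟩ := abs_le.1 hclose
  have hD : hfun (ρ-1/2) - 2 * hfun (gam θ n * (ρ-1/2)) ≤ 8*(ρ-1/2)^3 + 14*(ε*(ρ-1/2)) := by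
    linarith
  rw [Wfun_half, sub_zero] at hρeq
  rw [hρeq]
  have hbb : (0:ℝ) < b - 1/2 := by linarith
  calc (hfun (ρ-1/2) - 2*hfun (gam θ n * (ρ-1/2))) * (b - 1/2)
      ≤ (8*(ρ-1/2)^3 + 14*(ε*(ρ-1/2))) * (b-1/2) := mul_le_mul_of_nonneg_right hD hbb.le
    _ ≤ (8*(b-1/2)^3 + 14*(ε*(b-1/2))) * (b-1/2) := by
        apply mul_le_mul_of_nonneg_right _ hbb.le
        have h3 : (ρ-1/2)^3 ≤ (b-1/2)^3 := pow_le_pow_left₀ hϱ0.le hϱb.le 3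
        nlinarith
    _ = 8*(b-1/2)^4 + 14*ε*(b-1/2)^2 := by ring

lemma geom_range_le (x : ℝ) (h0 : 0 ≤ x) (h1 : x < 1) (N : ℕ) :
    ∑ k ∈ Finset.range N, x^k ≤ (1-x)⁻¹ := by
  have hx1 : (0:ℝ) < 1 - x := by linarith
  rw [geom_sum_eq (by linarith : x ≠ 1)]
  rw [show (x^N - 1)/(x - 1) = (1 - x^N)/(1-x) by rw [div_eq_div_iff (by linarith) hx1.ne']; ring]
  rw [inv_eq_one_div]
  apply (div_le_div_iff_of_pos_right hx1).mpr
  have : 0 ≤ x^N := by positivity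
  linarith

lemma one_sub_exp_neg_inv (dd : ℝ) (h0 : 0 < dd) (h1 : dd ≤ 1) :
    (1 - Real.exp (-dd))⁻¹ ≤ 2/dd := by
  have h2 : Real.exp (-dd) ≤ (1+dd)⁻¹ := by
    rw [Real.exp_neg]
    apply inv_anti₀ (by linarith)
    linarith [Real.add_one_le_exp dd]
  have h3 : (1+dd)⁻¹ ≤ 1 - dd/2 := by
    rw [inv_le_iff_one_le_mul₀ (by linarith)]
    nlinarith
  have h4 : dd/2 ≤ 1 - Real.exp (-dd) := by linarith
  calc (1 - Real.exp (-dd))⁻¹ ≤ (dd/2)⁻¹ := by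
        apply inv_anti₀ (by linarith) h4
    _ = 2/dd := by rw [inv_div]


set_option maxHeartbeats 3000000 in
/-- Tail bound on the middle interval: for large `c2` and `n` large,
 for `m_n + c2 n^{3/4} ≤ l ≤ (3/4)n`, `π_n([l,n]) ≤ K (n^{3/4}/(l - m_n)) e^{-nW(l/n)}`. -/
theorem piTail_middle_interval_bound (θ : ℝ) :
    ∃ K c0 : ℝ, 0 < K ∧ 0 < c0 ∧ ∀ c2 : ℝ, c0 ≤ c2 →
      ∃ N : ℕ, ∀ n : ℕ, N ≤ n → Even n →
        ∀ l : ℕ, (n : ℝ) / 2 + c2 * (n : ℝ) ^ ((3 : ℝ) / 4) ≤ l → 4 * l ≤ 3 * n →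
          piTail θ n l
            ≤ K * ((n : ℝ) ^ ((3 : ℝ) / 4) / ((l : ℝ) - (n : ℝ) / 2))
              * Real.exp (-(n : ℝ) * Wfun θ n ((l : ℝ) / n)) := by
  refine ⟨100 * Real.exp (8 + 7*|θ|), 3 + 2*Real.sqrt |θ|, by positivity, by positivity, ?_⟩
  intro c2 hc2
  refine ⟨2^20 + Nat.ceil ((100:ℝ)*θ^2), ?_⟩
  intro n hn hEven l hl1 hl2
  -- ### basic numeric facts
  have hn20 : (2^20 : ℕ) ≤ n := le_trans (Nat.le_add_right _ _) hn
  have hn0 : 0 < n := lt_of_lt_of_le (by norm_num) hn20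
  have hnR : (0:ℝ) < n := by exact_mod_cast hn0
  have hnR20 : (1048576:ℝ) ≤ (n:ℝ) := by exact_mod_cast hn20
  have hθ2n : 100*θ^2 ≤ (n:ℝ) := by
    have h1 : Nat.ceil ((100:ℝ)*θ^2) ≤ n := le_trans (Nat.le_add_left _ _) hn
    exact le_trans (Nat.le_ceil _) (by exact_mod_cast h1)
  -- ### s = √n, r = n^{1/4}
  obtain ⟨s, hs⟩ : ∃ s : ℝ, s = Real.sqrt n := ⟨_, rfl⟩
  obtain ⟨r, hr⟩ : ∃ r : ℝ, r = Real.sqrt s := ⟨_, rfl⟩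
  have hs0 : (0:ℝ) < s := by rw [hs]; exact Real.sqrt_pos.2 hnR
  have hr0 : (0:ℝ) < r := by rw [hr]; exact Real.sqrt_pos.2 hs0
  have hs2 : s^2 = n := by rw [hs]; exact Real.sq_sqrt hnR.le
  have hr2 : r^2 = s := by rw [hr]; exact Real.sq_sqrt hs0.le
  have hr4 : r^4 = n := by
    have h1 : r^4 = (r^2)^2 := by ring
    rw [h1, hr2, hs2]
  have h34 : (n:ℝ)^((3:ℝ)/4) = s*r := by
    have e1 : (n:ℝ)^((3:ℝ)/4) = (n:ℝ)^((1:ℝ)/2) * (n:ℝ)^((1:ℝ)/4) := by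
      rw [← Real.rpow_add hnR]; norm_num
    have e2 : (n:ℝ)^((1:ℝ)/2) = s := by
      rw [hs, Real.sqrt_eq_rpow]
    have e3 : (n:ℝ)^((1:ℝ)/4) = r := by
      rw [show ((1:ℝ)/4) = (1/2)*(1/2) by norm_num, Real.rpow_mul hnR.le, hr, hs,
        Real.sqrt_eq_rpow, Real.sqrt_eq_rpow]
    rw [e1, e2, e3]
  have hr32 : (32:ℝ) ≤ r := by
    by_contra hcon
    push_neg at hcon
    have h1 : r^4 < 32^4 := by
      apply pow_lt_pow_left₀ hcon hr0.le
      norm_num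
    rw [hr4] at h1
    norm_num at h1
    linarith
  have hs1 : (1:ℝ) ≤ s := by nlinarith only [hs2, hs0, hnR20]
  have hsn : s ≤ n := by nlinarith only [hs2, hs1, hs0]
  -- ### gamma facts
  have hθs : 10*|θ| ≤ s := by
    have h1 : (10*|θ|)^2 = 100*θ^2 := by rw [mul_pow, sq_abs]; norm_num
    have h2 : Real.sqrt ((10*|θ|)^2) ≤ Real.sqrt n := by
      rw [h1]; exact Real.sqrt_le_sqrt hθ2n
    rwa [Real.sqrt_sq (by positivity), ← hs] at h2
  have hγeq : gam θ n - 1/2 = -(θ/(2*s)) := by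
    rw [gam, ← hs]; ring
  have hge : |gam θ n - 1/2| ≤ |θ|/(2*s) := by
    rw [hγeq, abs_neg, abs_div, abs_of_pos (by positivity : (0:ℝ) < 2*s)]
  have h20 : |θ|/(2*s) ≤ 1/20 := by
    rw [div_le_div_iff₀ (by positivity) (by norm_num)]
    linarith
  have habs20 := abs_le.1 (le_trans hge h20)
  have hγl : (0.45:ℝ) ≤ gam θ n := by
    have h1 := habs20.1; norm_num at h1 ⊢; linarith
  have hγu : gam θ n ≤ 0.55 := by
    have h1 := habs20.2; norm_num at h1 ⊢; linarith
  -- ### c2 facts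
  have hsql : Real.sqrt |θ| * Real.sqrt |θ| = |θ| := Real.mul_self_sqrt (abs_nonneg θ)
  have hc21 : (1:ℝ) ≤ c2 := by nlinarith only [Real.sqrt_nonneg |θ|, hc2]
  have hc2sq : 7*|θ| ≤ 3*c2^2 := by nlinarith only [Real.sqrt_nonneg |θ|, hc2, hsql]
  -- ### l facts
  have hlR : (n:ℝ)/2 + c2*(s*r) ≤ l := by rwa [h34] at hl1
  have hsrn : s*r/(n:ℝ) = 1/r := by
    rw [← hs2, ← hr2]; field_simp
  obtain ⟨Rl, hRl⟩ : ∃ x:ℝ, x = (l:ℝ)/n - 1/2 := ⟨_, rfl⟩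
  have hRl_lb : c2/r ≤ Rl := by
    rw [hRl]
    have h1 : ((n:ℝ)/2 + c2*(s*r))/n ≤ (l:ℝ)/n := (div_le_div_iff_of_pos_right hnR).2 hlR
    have h2 : ((n:ℝ)/2 + c2*(s*r))/n = 1/2 + c2*(s*r/n) := by
      field_simp
    rw [h2, hsrn] at h1
    have h3 : c2*(1/r) = c2/r := by ring
    linarith [h1, h3.le, h3.ge]
  have hRl_pos : (0:ℝ) < Rl := lt_of_lt_of_le (by positivity) hRl_lb
  have hl2R : 4*(l:ℝ) ≤ 3*n := by exact_mod_cast hl2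
  have hRl_ub : Rl ≤ 1/4 := by
    have h34l : (l:ℝ)/n ≤ 3/4 := by rw [div_le_iff₀ hnR]; linarith
    rw [hRl]; linarith
  have hrRl : (1:ℝ) ≤ r*Rl := by
    have h1 : r*(c2/r) ≤ r*Rl := mul_le_mul_of_nonneg_left hRl_lb hr0.le
    rw [mul_div_cancel₀ _ hr0.ne'] at h1
    linarith
  have hRl3 : Rl^3 ≤ 1/64 := by
    calc Rl^3 ≤ (1/4:ℝ)^3 := pow_le_pow_left₀ hRl_pos.le hRl_ub 3
      _ = 1/64 := by norm_num
  have hlnR : (n:ℝ)/2 < l := by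
    have hpos : (0:ℝ) < c2*(s*r) := mul_pos (lt_of_lt_of_le one_pos hc21) (mul_pos hs0 hr0)
    linarith only [hlR, hpos]
  have hln : n < 2*l := by exact_mod_cast (by linarith : (n:ℝ) < 2*l)
  -- M and T
  obtain ⟨M, hM⟩ : ∃ M, M = 7*n/8 := ⟨_, rfl⟩
  obtain ⟨T, hT⟩ : ∃ T, T = 3*n/4 + 1 := ⟨_, rfl⟩
  have hlM : l ≤ M := by omega
  have hMn : M + 1 ≤ n := by omega
  have hTl : l ≤ T := by omega
  have hTM1 : T ≤ M + 1 := by omega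
  have hMcount : n ≤ 16*(M+1-T) := by omega
  have h4T : 3*n + 1 ≤ 4*T := by omega
  have h8M : 7*n + 1 ≤ 8*(M+1) := by omega
  -- ### per-site lower bounds
  have hϱj : ∀ j : ℕ, l ≤ j → Rl ≤ (j:ℝ)/n - 1/2 := by
    intro j hj
    have h1 : (l:ℝ)/n ≤ (j:ℝ)/n := (div_le_div_iff_of_pos_right hnR).2 (by exact_mod_cast hj)
    rw [hRl]; linarith
  -- ### per-step bound
  have hstep : ∀ j : ℕ, l ≤ j → j < n →
      ((j:ℝ)/n - 1/2)^3 * (1/(n:ℝ)) ≤ Wfun θ n (((j:ℝ)+1)/n) - Wfun θ n ((j:ℝ)/n) := by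
    intro j hj1 hj2
    have hjR : (l:ℝ) ≤ j := by exact_mod_cast hj1
    have hjn : (j:ℝ) + 1 ≤ n := by exact_mod_cast hj2
    have ha : 1/2 < (j:ℝ)/n := by
      rw [lt_div_iff₀ hnR]; linarith
    have hab : (j:ℝ)/n < ((j:ℝ)+1)/n := (div_lt_div_iff_of_pos_right hnR).2 (by linarith)
    have hb : ((j:ℝ)+1)/n ≤ 1 := by rw [div_le_one hnR]; linarith
    have haRl : Rl ≤ (j:ℝ)/n - 1/2 := hϱj j hj1
    have hsmall : 14 * (|θ|/(2*s)) ≤ 3*((j:ℝ)/n - 1/2)^2 := by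
      have h2 : c2/r ≤ (j:ℝ)/n - 1/2 := le_trans hRl_lb haRl
      have h3 : (c2/r)^2 ≤ ((j:ℝ)/n-1/2)^2 := pow_le_pow_left₀ (by positivity) h2 2
      have h4 : (c2/r)^2 = c2^2/s := by rw [div_pow, hr2]
      rw [h4] at h3
      have h5 : 14*(|θ|/(2*s)) = (7*|θ|)/s := by ring
      have h6 : (7*|θ|)/s ≤ (3*c2^2)/s := (div_le_div_iff_of_pos_right hs0).2 hc2sq
      have h7 : (3*c2^2)/s = 3*(c2^2/s) := by ring
      rw [h5]
      rw [h7] at h6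
      linarith
    have hW := W_step_ge θ n hγl hγu (|θ|/(2*s)) hge ((j:ℝ)/n) (((j:ℝ)+1)/n) hab ha hb hsmall
    have hba : ((j:ℝ)+1)/n - (j:ℝ)/n = 1/n := by field_simp; ring
    rw [hba] at hW
    exact hW
  -- ### cumulative bound
  have hcum : ∀ m : ℕ, l ≤ m → m ≤ n →
      Wfun θ n ((l:ℝ)/n) + (∑ j ∈ Finset.Ico l m, ((j:ℝ)/n - 1/2)^3) * (1/(n:ℝ))
        ≤ Wfun θ n ((m:ℝ)/n) := by
    intro m hm1
    induction m, hm1 using Nat.le_induction with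
    | base => intro _; simp
    | succ m hm ih =>
      intro hm2
      have ih' := ih (by omega)
      have hstep' := hstep m (by omega) (by omega)
      rw [Finset.sum_Ico_succ_top hm]
      have hexp : (∑ j ∈ Finset.Ico l m, ((j:ℝ)/n - 1/2)^3 + ((m:ℝ)/n - 1/2)^3) * (1/(n:ℝ))
          = (∑ j ∈ Finset.Ico l m, ((j:ℝ)/n - 1/2)^3) * (1/(n:ℝ)) + ((m:ℝ)/n - 1/2)^3 * (1/(n:ℝ)) := by
        ring
      rw [hexp]
      have hcast : ((m+1:ℕ):ℝ) = (m:ℝ)+1 := by push_cast; ring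
      rw [hcast]
      linarith
  -- ### region 1 exponential decay
  have hWexp1 : ∀ m : ℕ, l ≤ m → m ≤ n →
      Real.exp (-((n:ℝ) * Wfun θ n ((m:ℝ)/n)))
        ≤ Real.exp (-((n:ℝ) * Wfun θ n ((l:ℝ)/n))) * (Real.exp (-Rl^3))^(m-l) := by
    intro m hm1 hm2
    have h1 := hcum m hm1 hm2
    have h2 : ((m - l : ℕ):ℝ) * Rl^3 ≤ ∑ j ∈ Finset.Ico l m, ((j:ℝ)/n - 1/2)^3 := by
      calc ((m - l : ℕ):ℝ) * Rl^3 = ∑ _j ∈ Finset.Ico l m, Rl^3 := by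
            rw [Finset.sum_const, Nat.card_Ico, nsmul_eq_mul]
        _ ≤ _ := by
            apply Finset.sum_le_sum
            intro j hj
            exact pow_le_pow_left₀ hRl_pos.le (hϱj j (Finset.mem_Ico.1 hj).1) 3
    have h3 : (n:ℝ) * Wfun θ n ((l:ℝ)/n) + ((m-l:ℕ):ℝ)*Rl^3 ≤ (n:ℝ)*Wfun θ n ((m:ℝ)/n) := by
      have h4 := mul_le_mul_of_nonneg_left h1 hnR.le
      have h5 : (n:ℝ) * ((∑ j ∈ Finset.Ico l m, ((j:ℝ)/n - 1/2)^3) * (1/(n:ℝ)))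
          = ∑ j ∈ Finset.Ico l m, ((j:ℝ)/n - 1/2)^3 := by
        rw [mul_comm, mul_assoc, one_div_mul_cancel hnR.ne', mul_one]
      rw [mul_add, h5] at h4
      linarith
    rw [← Real.exp_nat_mul, ← Real.exp_add]
    apply Real.exp_le_exp.2
    have : ((m-l:ℕ):ℝ) * (-Rl^3) = -(((m-l:ℕ):ℝ) * Rl^3) := by ring
    rw [this]
    linarith
  -- ### region 2 exponential decay
  have hWexp2 : ∀ m : ℕ, M+1 ≤ m → m ≤ n →
      Real.exp (-((n:ℝ)*Wfun θ n ((m:ℝ)/n)))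
        ≤ (Real.exp (-((n:ℝ)*Wfun θ n ((l:ℝ)/n))) * Real.exp (-((n:ℝ)/1024)))
            * (Real.exp (-(1:ℝ)/20))^(m-(M+1)) := by
    intro m hm1 hm2
    have h1 := hcum m (by omega) hm2
    have hsplit1 : ∑ j ∈ Finset.Ico l T, ((j:ℝ)/n - 1/2)^3
        + ∑ j ∈ Finset.Ico T (M+1), ((j:ℝ)/n - 1/2)^3
        + ∑ j ∈ Finset.Ico (M+1) m, ((j:ℝ)/n - 1/2)^3
        = ∑ j ∈ Finset.Ico l m, ((j:ℝ)/n - 1/2)^3 := by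
      rw [add_assoc, Finset.sum_Ico_consecutive _ hTM1 hm1,
        Finset.sum_Ico_consecutive _ hTl (le_trans hTM1 hm1)]
    have hb1 : (0:ℝ) ≤ ∑ j ∈ Finset.Ico l T, ((j:ℝ)/n - 1/2)^3 := by
      apply Finset.sum_nonneg
      intro j hj
      have h1 := hϱj j (Finset.mem_Ico.1 hj).1
      exact pow_nonneg (by linarith only [h1, hRl_pos.le]) 3
    have hb2 : ((M+1-T:ℕ):ℝ) * (1/64) ≤ ∑ j ∈ Finset.Ico T (M+1), ((j:ℝ)/n - 1/2)^3 := by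
      calc ((M+1-T:ℕ):ℝ) * (1/64) = ∑ _j ∈ Finset.Ico T (M+1), ((1:ℝ)/64) := by
            rw [Finset.sum_const, Nat.card_Ico, nsmul_eq_mul]
        _ ≤ _ := by
            apply Finset.sum_le_sum
            intro j hj
            have hjT : T ≤ j := (Finset.mem_Ico.1 hj).1
            have h4j : 3*(n:ℝ) + 1 ≤ 4*(j:ℝ) := by
              have : 3*n + 1 ≤ 4*j := by omega
              exact_mod_cast this
            have hq : (1:ℝ)/4 ≤ (j:ℝ)/n - 1/2 := by
              have h34j : (3:ℝ)/4 ≤ (j:ℝ)/n := by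
                rw [div_le_div_iff₀ (by norm_num) hnR]
                linarith
              linarith
            calc ((1:ℝ)/64) = ((1:ℝ)/4)^3 := by norm_num
              _ ≤ ((j:ℝ)/n - 1/2)^3 := pow_le_pow_left₀ (by norm_num) hq 3
    have hb3 : ((m-(M+1):ℕ):ℝ) * (1/20) ≤ ∑ j ∈ Finset.Ico (M+1) m, ((j:ℝ)/n - 1/2)^3 := by
      calc ((m-(M+1):ℕ):ℝ) * (1/20) = ∑ _j ∈ Finset.Ico (M+1) m, ((1:ℝ)/20) := by
            rw [Finset.sum_const, Nat.card_Ico, nsmul_eq_mul]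
        _ ≤ _ := by
            apply Finset.sum_le_sum
            intro j hj
            have hjM : M+1 ≤ j := (Finset.mem_Ico.1 hj).1
            have h8j : 7*(n:ℝ) + 1 ≤ 8*(j:ℝ) := by
              have : 7*n + 1 ≤ 8*j := by omega
              exact_mod_cast this
            have hq : (3:ℝ)/8 ≤ (j:ℝ)/n - 1/2 := by
              have h78j : (7:ℝ)/8 ≤ (j:ℝ)/n := by
                rw [div_le_div_iff₀ (by norm_num) hnR]
                linarith
              linarith
            calc ((1:ℝ)/20) ≤ ((3:ℝ)/8)^3 := by norm_num
              _ ≤ ((j:ℝ)/n - 1/2)^3 := pow_le_pow_left₀ (by norm_num) hq 3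
    have hcount : (n:ℝ)/1024 ≤ ((M+1-T:ℕ):ℝ) * (1/64) := by
      have : (n:ℝ) ≤ 16*((M+1-T:ℕ):ℝ) := by exact_mod_cast hMcount
      linarith
    have h3 : (n:ℝ) * Wfun θ n ((l:ℝ)/n) + ((n:ℝ)/1024 + ((m-(M+1):ℕ):ℝ)*(1/20))
        ≤ (n:ℝ)*Wfun θ n ((m:ℝ)/n) := by
      have h4 := mul_le_mul_of_nonneg_left h1 hnR.le
      have h5 : (n:ℝ) * ((∑ j ∈ Finset.Ico l m, ((j:ℝ)/n - 1/2)^3) * (1/(n:ℝ)))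
          = ∑ j ∈ Finset.Ico l m, ((j:ℝ)/n - 1/2)^3 := by
        rw [mul_comm, mul_assoc, one_div_mul_cancel hnR.ne', mul_one]
      rw [mul_add, h5] at h4
      have h6 : (n:ℝ)/1024 + ((m-(M+1):ℕ):ℝ)*(1/20) ≤ ∑ j ∈ Finset.Ico l m, ((j:ℝ)/n - 1/2)^3 := by
        rw [← hsplit1]
        linarith
      linarith
    rw [← Real.exp_nat_mul, ← Real.exp_add, ← Real.exp_add]
    apply Real.exp_le_exp.2
    have : ((m-(M+1):ℕ):ℝ) * (-(1:ℝ)/20) = -(((m-(M+1):ℕ):ℝ) * (1/20)) := by ring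
    rw [this]
    linarith
  -- ### term bounds
  have hterm1 : ∀ m : ℕ, l ≤ m → m ≤ M →
      (n.choose m : ℝ)/2^n * Real.exp ((n:ℝ) * U0 θ n ((m:ℝ)/n))
        ≤ (3/s) * Real.exp (-((n:ℝ)*Wfun θ n ((m:ℝ)/n))) := by
    intro m hm1 hm2
    have h0m : 0 < m := by omega
    have hmn : m < n := by omega
    rw [term_eq θ n m h0m hmn.le]
    apply mul_le_mul_of_nonneg_right _ (Real.exp_pos _).le
    have hcb := (choose_bounds n m h0m hmn).2
    have hm2' : (n:ℝ) ≤ 2*(m:ℝ) := by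
      have : n ≤ 2*m := by omega
      exact_mod_cast this
    have hnm8 : (n:ℝ) ≤ 8*((n-m:ℕ):ℝ) := by
      have : n ≤ 8*(n-m) := by omega
      exact_mod_cast this
    have hmpos : (0:ℝ) < (m:ℝ) := by exact_mod_cast h0m
    have hnmpos : (0:ℝ) < ((n-m:ℕ):ℝ) := by
      have : 0 < n - m := by omega
      exact_mod_cast this
    have hprod : ((n:ℝ)/4)^2 ≤ (m:ℝ)*((n-m:ℕ):ℝ) := by nlinarith only [hm2', hnm8, hmpos, hnmpos, hnR]
    have hsq : (n:ℝ)/4 ≤ Real.sqrt (m:ℝ) * Real.sqrt ((n-m:ℕ):ℝ) := by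
      rw [← Real.sqrt_mul hmpos.le]
      have h1 : Real.sqrt (((n:ℝ)/4)^2) ≤ Real.sqrt ((m:ℝ)*((n-m:ℕ):ℝ)) :=
        Real.sqrt_le_sqrt hprod
      rwa [Real.sqrt_sq (by positivity)] at h1
    calc (n.choose m : ℝ) * (((m:ℝ)/n)^m * (((n:ℝ) - m)/n)^(n-m))
        ≤ (3/4) * (Real.sqrt (n:ℝ) / (Real.sqrt (m:ℝ) * Real.sqrt ((n-m:ℕ):ℝ))) := hcb
      _ ≤ (3/4) * (s / ((n:ℝ)/4)) := by
          apply mul_le_mul_of_nonneg_left _ (by norm_num)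
          rw [← hs]
          exact div_le_div_of_nonneg_left (by positivity) (by positivity) hsq
      _ = 3/s := by
          rw [← hs2]; field_simp
  have hterm2 : ∀ m : ℕ, l ≤ m → m ≤ n →
      (n.choose m : ℝ)/2^n * Real.exp ((n:ℝ) * U0 θ n ((m:ℝ)/n))
        ≤ Real.exp (-((n:ℝ)*Wfun θ n ((m:ℝ)/n))) := by
    intro m hm1 hm2
    have h0m : 0 < m := by omega
    rw [term_eq θ n m h0m hm2]
    calc (n.choose m : ℝ) * (((m:ℝ)/n)^m * (((n:ℝ) - m)/n)^(n-m))
          * Real.exp (-((n:ℝ)*Wfun θ n ((m:ℝ)/n)))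
        ≤ 1 * Real.exp (-((n:ℝ)*Wfun θ n ((m:ℝ)/n))) := by
          apply mul_le_mul_of_nonneg_right (choose_mul_le_one n m hn0 hm2) (Real.exp_pos _).le
      _ = _ := by ring
  -- ### region 1 sum
  have hsum1 : ∑ m ∈ Finset.Icc l M,
        (n.choose m : ℝ)/2^n * Real.exp ((n:ℝ) * U0 θ n ((m:ℝ)/n))
      ≤ (3/s) * Real.exp (-((n:ℝ)*Wfun θ n ((l:ℝ)/n))) * (2/Rl^3) := by
    have hx0 : 0 ≤ Real.exp (-Rl^3) := (Real.exp_pos _).le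
    have hx1 : Real.exp (-Rl^3) < 1 := by
      rw [Real.exp_lt_one_iff]
      have : (0:ℝ) < Rl^3 := pow_pos hRl_pos 3
      linarith only [this]
    calc ∑ m ∈ Finset.Icc l M, (n.choose m : ℝ)/2^n * Real.exp ((n:ℝ) * U0 θ n ((m:ℝ)/n))
        ≤ ∑ m ∈ Finset.Icc l M,
            (3/s) * (Real.exp (-((n:ℝ) * Wfun θ n ((l:ℝ)/n))) * (Real.exp (-Rl^3))^(m-l)) := by
          apply Finset.sum_le_sum
          intro m hm
          obtain ⟨hm1, hm2⟩ := Finset.mem_Icc.1 hm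
          calc (n.choose m : ℝ)/2^n * Real.exp ((n:ℝ) * U0 θ n ((m:ℝ)/n))
              ≤ (3/s) * Real.exp (-((n:ℝ)*Wfun θ n ((m:ℝ)/n))) := hterm1 m hm1 hm2
            _ ≤ _ := by
                apply mul_le_mul_of_nonneg_left (hWexp1 m hm1 (by omega)) (by positivity)
      _ = (3/s) * Real.exp (-((n:ℝ) * Wfun θ n ((l:ℝ)/n)))
            * ∑ m ∈ Finset.Icc l M, (Real.exp (-Rl^3))^(m-l) := by
          rw [Finset.mul_sum]
          apply Finset.sum_congr rfl
          intro m _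
          ring
      _ ≤ (3/s) * Real.exp (-((n:ℝ) * Wfun θ n ((l:ℝ)/n))) * (2/Rl^3) := by
          apply mul_le_mul_of_nonneg_left _ (by positivity)
          have hre : ∑ m ∈ Finset.Icc l M, (Real.exp (-Rl^3))^(m-l)
              = ∑ k ∈ Finset.range (M+1-l), (Real.exp (-Rl^3))^k := by
            rw [← Finset.Ico_add_one_right_eq_Icc, Finset.sum_Ico_eq_sum_range]
            apply Finset.sum_congr rfl
            intro k _
            congr 1
            omega
          rw [hre]
          calc ∑ k ∈ Finset.range (M+1-l), (Real.exp (-Rl^3))^k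
              ≤ (1 - Real.exp (-Rl^3))⁻¹ := geom_range_le _ hx0 hx1 _
            _ ≤ 2/Rl^3 := one_sub_exp_neg_inv _ (by positivity) (by linarith only [hRl3])
  -- ### region 2 sum
  have hsum2 : ∑ m ∈ Finset.Icc (M+1) n,
        (n.choose m : ℝ)/2^n * Real.exp ((n:ℝ) * U0 θ n ((m:ℝ)/n))
      ≤ Real.exp (-((n:ℝ)*Wfun θ n ((l:ℝ)/n))) * Real.exp (-((n:ℝ)/1024)) * 40 := by
    have hy0 : 0 ≤ Real.exp (-(1:ℝ)/20) := (Real.exp_pos _).le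
    have hy1 : Real.exp (-(1:ℝ)/20) < 1 := by
      rw [show (-(1:ℝ)/20) = -(1/20) by ring, Real.exp_lt_one_iff]
      norm_num
    calc ∑ m ∈ Finset.Icc (M+1) n, (n.choose m : ℝ)/2^n * Real.exp ((n:ℝ) * U0 θ n ((m:ℝ)/n))
        ≤ ∑ m ∈ Finset.Icc (M+1) n,
            (Real.exp (-((n:ℝ)*Wfun θ n ((l:ℝ)/n))) * Real.exp (-((n:ℝ)/1024)))
              * (Real.exp (-(1:ℝ)/20))^(m-(M+1)) := by
          apply Finset.sum_le_sum
          intro m hm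
          obtain ⟨hm1, hm2⟩ := Finset.mem_Icc.1 hm
          calc (n.choose m : ℝ)/2^n * Real.exp ((n:ℝ) * U0 θ n ((m:ℝ)/n))
              ≤ Real.exp (-((n:ℝ)*Wfun θ n ((m:ℝ)/n))) := hterm2 m (by omega) hm2
            _ ≤ _ := hWexp2 m hm1 hm2
      _ = (Real.exp (-((n:ℝ)*Wfun θ n ((l:ℝ)/n))) * Real.exp (-((n:ℝ)/1024)))
            * ∑ m ∈ Finset.Icc (M+1) n, (Real.exp (-(1:ℝ)/20))^(m-(M+1)) := by
          rw [Finset.mul_sum]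
      _ ≤ Real.exp (-((n:ℝ)*Wfun θ n ((l:ℝ)/n))) * Real.exp (-((n:ℝ)/1024)) * 40 := by
          apply mul_le_mul_of_nonneg_left _ (by positivity)
          have hre : ∑ m ∈ Finset.Icc (M+1) n, (Real.exp (-(1:ℝ)/20))^(m-(M+1))
              = ∑ k ∈ Finset.range (n+1-(M+1)), (Real.exp (-(1:ℝ)/20))^k := by
            rw [← Finset.Ico_add_one_right_eq_Icc, Finset.sum_Ico_eq_sum_range]
            apply Finset.sum_congr rfl
            intro k _
            congr 1
            omega
          rw [hre]
          calc ∑ k ∈ Finset.range (n+1-(M+1)), (Real.exp (-(1:ℝ)/20))^k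
              ≤ (1 - Real.exp (-(1:ℝ)/20))⁻¹ := geom_range_le _ hy0 hy1 _
            _ ≤ 2/(1/20) := by
                have := one_sub_exp_neg_inv (1/20) (by norm_num) (by norm_num)
                rw [show (-(1:ℝ)/20) = -(1/20) by ring]
                exact this
            _ = 40 := by norm_num
  -- region 2 is dominated
  have hsum2' : Real.exp (-((n:ℝ)/1024)) * 40 ≤ (3/s) * (2/Rl^3) := by
    have hexpn : ((n:ℝ)/2048)^2 ≤ Real.exp ((n:ℝ)/1024) := by
      have h1 : (n:ℝ)/2048 + 1 ≤ Real.exp ((n:ℝ)/2048) := by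
        have := Real.add_one_le_exp ((n:ℝ)/2048)
        linarith
      have h2 : Real.exp ((n:ℝ)/1024) = Real.exp ((n:ℝ)/2048) * Real.exp ((n:ℝ)/2048) := by
        rw [← Real.exp_add]; congr 1; ring
      nlinarith only [h1, h2, Real.exp_pos ((n:ℝ)/2048), hnR]
    have h40 : 40 * Real.exp (-((n:ℝ)/1024)) ≤ 384/s := by
      rw [Real.exp_neg]
      have e4 : (40:ℝ)*(Real.exp ((n:ℝ)/1024))⁻¹ = 40/Real.exp ((n:ℝ)/1024) := by ring
      rw [e4, div_le_div_iff₀ (Real.exp_pos _) hs0]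
      nlinarith only [hexpn, hsn, hnR20, hs0]
    have h384 : (384:ℝ)/s ≤ (3/s)*(2/Rl^3) := by
      rw [show (3/s)*(2/Rl^3) = 6/(s*Rl^3) by field_simp; norm_num]
      rw [div_le_div_iff₀ hs0 (by positivity)]
      nlinarith only [hRl3, hs0]
    linarith
  -- ### total tail sum
  have hsplitIcc : Finset.Icc l n = Finset.Icc l M ∪ Finset.Icc (M+1) n := by
    ext j
    simp only [Finset.mem_Icc, Finset.mem_union]
    omega
  have hdisj : Disjoint (Finset.Icc l M) (Finset.Icc (M+1) n) := by
    rw [Finset.disjoint_left]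
    intro j hj1 hj2
    simp only [Finset.mem_Icc] at hj1 hj2
    omega
  have hStotal : ∑ m ∈ Finset.Icc l n,
        (n.choose m : ℝ)/2^n * Real.exp ((n:ℝ) * U0 θ n ((m:ℝ)/n))
      ≤ (12/(s*Rl^3)) * Real.exp (-((n:ℝ)*Wfun θ n ((l:ℝ)/n))) := by
    rw [hsplitIcc, Finset.sum_union hdisj]
    have e1 : (3/s) * Real.exp (-((n:ℝ)*Wfun θ n ((l:ℝ)/n))) * (2/Rl^3)
        = (6/(s*Rl^3)) * Real.exp (-((n:ℝ)*Wfun θ n ((l:ℝ)/n))) := by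
      field_simp; ring
    have e2 : Real.exp (-((n:ℝ)*Wfun θ n ((l:ℝ)/n))) * Real.exp (-((n:ℝ)/1024)) * 40
        ≤ (6/(s*Rl^3)) * Real.exp (-((n:ℝ)*Wfun θ n ((l:ℝ)/n))) := by
      have e3 : (3/s) * (2/Rl^3) = 6/(s*Rl^3) := by field_simp; ring
      rw [← e3]
      calc Real.exp (-((n:ℝ)*Wfun θ n ((l:ℝ)/n))) * Real.exp (-((n:ℝ)/1024)) * 40
          = (Real.exp (-((n:ℝ)/1024)) * 40) * Real.exp (-((n:ℝ)*Wfun θ n ((l:ℝ)/n))) := by ring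
        _ ≤ ((3/s)*(2/Rl^3)) * Real.exp (-((n:ℝ)*Wfun θ n ((l:ℝ)/n))) :=
            mul_le_mul_of_nonneg_right hsum2' (Real.exp_pos _).le
    have := hsum1
    rw [e1] at this
    have h12 : (6:ℝ)/(s*Rl^3) + 6/(s*Rl^3) = 12/(s*Rl^3) := by ring
    calc _ ≤ (6/(s*Rl^3)) * Real.exp (-((n:ℝ)*Wfun θ n ((l:ℝ)/n)))
            + (6/(s*Rl^3)) * Real.exp (-((n:ℝ)*Wfun θ n ((l:ℝ)/n))) :=
          add_le_add this (le_trans hsum2 e2)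
      _ = _ := by ring
  -- ### Z lower bound
  obtain ⟨t, ht⟩ := hEven
  obtain ⟨u, hu⟩ : ∃ u, u = Nat.floor (s*r) := ⟨_, rfl⟩
  have hsrpos : (0:ℝ) < s*r := mul_pos hs0 hr0
  have hu1 : (u:ℝ) ≤ s*r := by rw [hu]; exact Nat.floor_le hsrpos.le
  have hu2 : s*r ≤ (u:ℝ)+1 := by rw [hu]; exact (Nat.lt_floor_add_one _).le
  have htR : (t:ℝ) = (n:ℝ)/2 := by
    have : (n:ℝ) = t + t := by exact_mod_cast ht
    linarith
  have hsrr : s*r*r = n := by linear_combination s*hr2 + hs2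
  have hsrn32 : s*r ≤ (n:ℝ)/32 := by nlinarith only [hsrr, hr32, mul_pos hs0 hr0]
  have htunR : (t:ℝ) + u < n := by
    rw [htR]
    linarith only [hu1, hsrn32, hnR20]
  have htu_lt : t + u < n := by exact_mod_cast (by push_cast; linarith : ((t + u : ℕ):ℝ) < n)
  have ht1 : 1 ≤ t := by omega
  have hZterm : ∀ m : ℕ, t ≤ m → m ≤ t + u →
      (4/(9*s)) * Real.exp (-(8+7*|θ|))
        ≤ (n.choose m : ℝ)/2^n * Real.exp ((n:ℝ) * U0 θ n ((m:ℝ)/n)) := by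
    intro m hm1 hm2
    have h0m : 0 < m := by omega
    have hmn : m < n := by omega
    have hmR : (n:ℝ)/2 ≤ (m:ℝ) := by
      rw [← htR]; exact_mod_cast hm1
    have hmuR : (m:ℝ) ≤ (n:ℝ)/2 + s*r := by
      have : (m:ℝ) ≤ (t:ℝ) + u := by exact_mod_cast hm2
      rw [htR] at this
      linarith
    rw [term_eq θ n m h0m hmn.le]
    have hcastnm : ((n-m:ℕ):ℝ) = (n:ℝ) - m := by
      push_cast [Nat.cast_sub hmn.le]
      ring
    have hmpos : (0:ℝ) < (m:ℝ) := by exact_mod_cast h0m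
    have hnmpos : (0:ℝ) < ((n-m:ℕ):ℝ) := by
      have : 0 < n - m := by omega
      exact_mod_cast this
    -- Cq lower bound
    have hCq : 4/(9*s) ≤ (n.choose m : ℝ) * (((m:ℝ)/n)^m * (((n:ℝ) - m)/n)^(n-m)) := by
      have hcb := (choose_bounds n m h0m hmn).1
      have hprod : (m:ℝ)*((n-m:ℕ):ℝ) ≤ ((n:ℝ)/2)^2 := by
        rw [hcastnm]
        nlinarith only [sq_nonneg ((m:ℝ) - (n:ℝ)/2)]
      have hsq : Real.sqrt (m:ℝ) * Real.sqrt ((n-m:ℕ):ℝ) ≤ (n:ℝ)/2 := by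
        rw [← Real.sqrt_mul hmpos.le]
        have h1 : Real.sqrt ((m:ℝ)*((n-m:ℕ):ℝ)) ≤ Real.sqrt (((n:ℝ)/2)^2) :=
          Real.sqrt_le_sqrt hprod
        rwa [Real.sqrt_sq (by positivity)] at h1
      have hsqpos : (0:ℝ) < Real.sqrt (m:ℝ) * Real.sqrt ((n-m:ℕ):ℝ) := by
        apply mul_pos (Real.sqrt_pos.2 hmpos) (Real.sqrt_pos.2 hnmpos)
      calc 4/(9*s) = (2/9) * (s / ((n:ℝ)/2)) := by
            rw [← hs2]; field_simp; ring
        _ ≤ (2/9) * (Real.sqrt (n:ℝ) / (Real.sqrt (m:ℝ) * Real.sqrt ((n-m:ℕ):ℝ))) := by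
            apply mul_le_mul_of_nonneg_left _ (by norm_num)
            rw [← hs]
            exact div_le_div_of_nonneg_left hs0.le hsqpos hsq
        _ ≤ _ := hcb
    -- exp lower bound
    have hWle : (n:ℝ) * Wfun θ n ((m:ℝ)/n) ≤ 8 + 7*|θ| := by
      rcases eq_or_lt_of_le hm1 with he | hlt
      · have : (m:ℝ)/n = 1/2 := by
          rw [← he, htR]; field_simp
        rw [this, Wfun_half, mul_zero]
        positivity
      · have hb1 : 1/2 < (m:ℝ)/n := by
          rw [lt_div_iff₀ hnR]
          have : (t:ℝ) < m := by exact_mod_cast hlt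
          rw [htR] at this
          linarith
        have hb2 : (m:ℝ)/n ≤ 3/4 := by
          rw [div_le_iff₀ hnR]
          linarith only [hmuR, hsrn32, hnR20]
        have hq := W_le_quartic θ n hγl hγu (|θ|/(2*s)) hge ((m:ℝ)/n) hb1 hb2
        have hϱub : (m:ℝ)/n - 1/2 ≤ 1/r := by
          have e1 : (m:ℝ)/n ≤ ((n:ℝ)/2 + s*r)/n := (div_le_div_iff_of_pos_right hnR).2 hmuR
          have e2 : ((n:ℝ)/2 + s*r)/n = 1/2 + s*r/n := by field_simp
          rw [e2, hsrn] at e1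
          linarith only [e1]
        have hϱ0 : (0:ℝ) ≤ (m:ℝ)/n - 1/2 := by linarith
        have h4 : ((m:ℝ)/n - 1/2)^4 ≤ (1/r)^4 := pow_le_pow_left₀ hϱ0 hϱub 4
        have hsq2 : ((m:ℝ)/n - 1/2)^2 ≤ (1/r)^2 := pow_le_pow_left₀ hϱ0 hϱub 2
        have hr4' : (1/r)^4 = 1/(n:ℝ) := by
          rw [div_pow, one_pow, hr4]
        have hr2' : (1/r)^2 = 1/s := by
          rw [div_pow, one_pow, hr2]
        rw [hr4'] at h4
        rw [hr2'] at hsq2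
        have habs0 : (0:ℝ) ≤ |θ| := abs_nonneg θ
        calc (n:ℝ) * Wfun θ n ((m:ℝ)/n)
            ≤ (n:ℝ) * (8*((m:ℝ)/n-1/2)^4 + 14*(|θ|/(2*s))*((m:ℝ)/n-1/2)^2) :=
              mul_le_mul_of_nonneg_left hq hnR.le
          _ ≤ (n:ℝ) * (8*(1/(n:ℝ)) + 14*(|θ|/(2*s))*(1/s)) := by
              apply mul_le_mul_of_nonneg_left _ hnR.le
              have h5 : 14*(|θ|/(2*s))*((m:ℝ)/n-1/2)^2 ≤ 14*(|θ|/(2*s))*(1/s) := by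
                apply mul_le_mul_of_nonneg_left hsq2 (by positivity)
              linarith
          _ = 8 + 7 * |θ| * ((n:ℝ)/(s*s)) := by field_simp; ring
          _ = 8 + 7*|θ| := by
              have hss : s*s = (n:ℝ) := by linear_combination hs2
              rw [hss, div_self hnR.ne']
              ring
    have hE : Real.exp (-(8+7*|θ|)) ≤ Real.exp (-((n:ℝ)*Wfun θ n ((m:ℝ)/n))) := by
      apply Real.exp_le_exp.2
      linarith
    exact mul_le_mul hCq hE (Real.exp_pos _).le (le_trans (by positivity) hCq)
  have hZ : (4/9)*r*Real.exp (-(8+7*|θ|)) ≤ ZU θ n := by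
    rw [ZU_formula θ n hn0]
    have hsub : Finset.Icc t (t+u) ⊆ Finset.range (n+1) := by
      intro m hm
      simp only [Finset.mem_Icc] at hm
      simp only [Finset.mem_range]
      omega
    calc (4/9)*r*Real.exp (-(8+7*|θ|))
        ≤ ((u:ℝ)+1) * ((4/(9*s)) * Real.exp (-(8+7*|θ|))) := by
          have h1 : (4/9)*r*Real.exp (-(8+7*|θ|)) = (s*r) * ((4/(9*s)) * Real.exp (-(8+7*|θ|))) := by
            field_simp
          rw [h1]
          apply mul_le_mul_of_nonneg_right hu2 (by positivity)
      _ = ∑ _m ∈ Finset.Icc t (t+u), (4/(9*s)) * Real.exp (-(8+7*|θ|)) := by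
          rw [Finset.sum_const, Nat.card_Icc, nsmul_eq_mul]
          congr 1
          have hcard : t + u + 1 - t = u + 1 := by omega
          rw [hcard]
          push_cast
          ring
      _ ≤ ∑ m ∈ Finset.Icc t (t+u), (n.choose m : ℝ)/2^n * Real.exp ((n:ℝ) * U0 θ n ((m:ℝ)/n)) := by
          apply Finset.sum_le_sum
          intro m hm
          obtain ⟨hm1, hm2⟩ := Finset.mem_Icc.1 hm
          exact hZterm m hm1 hm2
      _ ≤ _ := by
          apply Finset.sum_le_sum_of_subset_of_nonneg hsub
          intro m _ _
          positivity
  -- ### conclusion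
  have hZpos : (0:ℝ) < ZU θ n := lt_of_lt_of_le (by positivity) hZ
  have hsumnonneg : (0:ℝ) ≤ ∑ m ∈ Finset.Icc l n,
      (n.choose m : ℝ)/2^n * Real.exp ((n:ℝ) * U0 θ n ((m:ℝ)/n)) := by
    apply Finset.sum_nonneg
    intro m _
    positivity
  rw [piTail_formula θ n l hn0]
  have hZinv : (ZU θ n)⁻¹ ≤ ((4/9)*r*Real.exp (-(8+7*|θ|)))⁻¹ :=
    inv_anti₀ (by positivity) hZ
  have hmain : (ZU θ n)⁻¹ * ∑ m ∈ Finset.Icc l n,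
        (n.choose m : ℝ)/2^n * Real.exp ((n:ℝ) * U0 θ n ((m:ℝ)/n))
      ≤ ((4/9)*r*Real.exp (-(8+7*|θ|)))⁻¹
          * ((12/(s*Rl^3)) * Real.exp (-((n:ℝ)*Wfun θ n ((l:ℝ)/n)))) := by
    apply mul_le_mul hZinv hStotal hsumnonneg (by positivity)
  refine le_trans hmain ?_
  have hlsub : (l:ℝ) - (n:ℝ)/2 = (n:ℝ)*Rl := by
    rw [hRl]; field_simp
  have hnegmul : -(n:ℝ) * Wfun θ n ((l:ℝ)/n) = -((n:ℝ) * Wfun θ n ((l:ℝ)/n)) := by ring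
  rw [h34, hlsub, hnegmul]
  have hXpos : (0:ℝ) < Real.exp (8+7*|θ|) := Real.exp_pos _
  have hE0X : Real.exp (-(8+7*|θ|)) = (Real.exp (8+7*|θ|))⁻¹ := Real.exp_neg _
  have hscal : ((4/9)*r*Real.exp (-(8+7*|θ|)))⁻¹ * (12/(s*Rl^3))
      ≤ (100 * Real.exp (8 + 7*|θ|)) * (s*r/((n:ℝ)*Rl)) := by
    rw [hE0X]
    have e5 : ((4/9)*r*(Real.exp (8+7*|θ|))⁻¹)⁻¹ * (12/(s*Rl^3))
        = 27*Real.exp (8+7*|θ|)/(r*s*Rl^3) := by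
      field_simp
      ring
    rw [e5]
    rw [div_le_iff₀ (by positivity : (0:ℝ) < r*s*Rl^3)]
    have e7 : (100 * Real.exp (8 + 7*|θ|))*(s*r/((n:ℝ)*Rl))*(r*s*Rl^3)
        = 100*Real.exp (8+7*|θ|)*((s*s)/(n:ℝ))*((r*Rl)*(r*Rl)) := by
      field_simp
    rw [e7, show s*s = (n:ℝ) by linear_combination hs2, div_self hnR.ne']
    nlinarith only [mul_le_mul hrRl hrRl (by norm_num : (0:ℝ) ≤ 1) (by positivity : (0:ℝ) ≤ r*Rl), hXpos]
  calc ((4/9)*r*Real.exp (-(8+7*|θ|)))⁻¹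
        * ((12/(s*Rl^3)) * Real.exp (-((n:ℝ)*Wfun θ n ((l:ℝ)/n))))
      = (((4/9)*r*Real.exp (-(8+7*|θ|)))⁻¹ * (12/(s*Rl^3)))
          * Real.exp (-((n:ℝ)*Wfun θ n ((l:ℝ)/n))) := by ring
    _ ≤ ((100 * Real.exp (8 + 7*|θ|)) * (s*r/((n:ℝ)*Rl)))
          * Real.exp (-((n:ℝ)*Wfun θ n ((l:ℝ)/n))) :=
        mul_le_mul_of_nonneg_right hscal (Real.exp_pos _).le

end
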